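/- arXiv:1510.02767 — 6 statements merged into one kernel-verified Lean document; each statement's English description precedes it below -/
import Mathlib

section
/- Let M ⊂ Z_d^{2n} be a Lagrangian subspace with basis B, and for v ∈ M define ρ_{M,v} = d^{-n} Σ_{m ∈ M} ω^{[v,m]} w_B(m). Then ρ_{M,v} is a rank-one orthogonal projection: ρ_{M,v}^2 = ρ_{M,v} and tr(ρ_{M,v}) = 1. -/
noncomputable section

open scoped Classical

/-- The phase space `V = ℤ_d^n × ℤ_d^n ≃ ℤ_d^{2n}` (momentum and position parts). -/
abbrev PhaseSpace (d n : ℕ) := (Fin n → ZMod d) × (Fin n → ZMod d)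

/-- The standard symplectic form `[u,v] = uᵀ J v` on `ℤ_d^{2n}`. -/
def sform {d n : ℕ} (u v : PhaseSpace d n) : ZMod d :=
  ∑ i, (u.1 i * v.2 i - u.2 i * v.1 i)

/-- A Lagrangian (maximally isotropic) subspace of the phase space. -/
def IsLagrangian {d n : ℕ} (M : Submodule (ZMod d) (PhaseSpace d n)) : Prop :=
  (∀ x ∈ M, ∀ y ∈ M, sform x y = 0) ∧ Module.finrank (ZMod d) M = n

/-- `ω = e^{2πi/d}`. -/
def omegaC (d : ℕ) : ℂ := Complex.exp (2 * Real.pi * Complex.I / d)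

/-- `τ = (-1)^d e^{πi/d}`. -/
def tauC (d : ℕ) : ℂ := (-1) ^ d * Complex.exp (Real.pi * Complex.I / d)

/-- The `n`-qudit Weyl operator `w(p,q) = w(p₁,q₁) ⊗ ⋯ ⊗ w(pₙ,qₙ)` on `(ℂ^d)^{⊗n}`,
written out in matrix entries: `w(p,q)_{x,y} = τ^{-Σᵢ pᵢqᵢ} ω^{p·x} δ_{x,y+q}`
(the exponent of `τ` being computed in the integers from representatives). -/
def weylN (d n : ℕ) (v : PhaseSpace d n) :
    Matrix (Fin n → ZMod d) (Fin n → ZMod d) ℂ := fun x y =>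
  (tauC d ^ (-((∑ i, (v.1 i).val * (v.2 i).val : ℕ) : ℤ)))
    * omegaC d ^ ((∑ i, v.1 i * x i : ZMod d)).val
    * (if x = y + v.2 then 1 else 0)

/-- The basis-dependent Weyl operators: given a basis `B = {u_i}` of a subspace
`M` and `m = Σ mᵢ uᵢ ∈ M`, set `w_B(m) = Πᵢ w(uᵢ)^{mᵢ}`. This turns `m ↦ w_B(m)`
into a true (non-projective) representation of `M` when `M` is isotropic. -/
def weylB {d n : ℕ} [NeZero d] {M : Submodule (ZMod d) (PhaseSpace d n)}
    {ι : Type*} [Fintype ι] (b : Module.Basis ι (ZMod d) M) (m : M) :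
    Matrix (Fin n → ZMod d) (Fin n → ZMod d) ℂ :=
  ((Finset.univ : Finset ι).toList.map
    (fun i => weylN d n ((b i : PhaseSpace d n)) ^ ((b.repr m) i).val)).prod

/-- The stabilizer-state operator `ρ_{M,v} = d^{-n} Σ_{m∈M} ω^{[v,m]} w_B(m)`. -/
def stabRho {d n : ℕ} [NeZero d] {M : Submodule (ZMod d) (PhaseSpace d n)}
    {ι : Type*} [Fintype ι] (b : Module.Basis ι (ZMod d) M) (v : PhaseSpace d n) :
    Matrix (Fin n → ZMod d) (Fin n → ZMod d) ℂ :=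
  ((d : ℂ) ^ n)⁻¹ • ∑ᶠ m : M, omegaC d ^ (sform v (m : PhaseSpace d n)).val • weylB b m

section Aux
variable {d n : ℕ} [NeZero d]

lemma omegaC_prim : IsPrimitiveRoot (omegaC d) d := by
  simpa [omegaC] using Complex.isPrimitiveRoot_exp d (NeZero.ne d)

lemma omegaC_pow_d : omegaC d ^ d = 1 := omegaC_prim.pow_eq_one

def phC (d : ℕ) (t : ZMod d) : ℂ := omegaC d ^ t.val

lemma phC_natCast (k : ℕ) : phC d (k : ZMod d) = omegaC d ^ k := by
  conv_rhs => rw [← Nat.div_add_mod k d, pow_add, pow_mul, omegaC_pow_d, one_pow, one_mul]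
  rw [phC, ZMod.val_natCast]

lemma phC_zero : phC d 0 = 1 := by simp [phC]

lemma phC_add (a b : ZMod d) : phC d (a + b) = phC d a * phC d b := by
  have : ((a.val + b.val : ℕ) : ZMod d) = a + b := by push_cast [ZMod.natCast_val]; simp
  rw [← this, phC_natCast, pow_add, phC, phC]

lemma phC_sum {α : Type*} (s : Finset α) (f : α → ZMod d) :
    phC d (∑ i ∈ s, f i) = ∏ i ∈ s, phC d (f i) := by
  induction s using Finset.cons_induction with
  | empty => simp [phC_zero]
  | cons a s ha ih => rw [Finset.sum_cons, Finset.prod_cons, phC_add, ih]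

lemma sum_phC_eq_zero (hd : 1 < d) : ∑ t : ZMod d, phC d t = 0 := by
  have := omegaC_prim (d := d) |>.geom_sum_eq_zero hd
  rw [← this]
  refine Finset.sum_nbij' (fun t => t.val) (fun k => (k : ZMod d)) ?_ ?_ ?_ ?_ ?_
  · intro a _; exact Finset.mem_range.mpr a.val_lt
  · intro a _; exact Finset.mem_univ _
  · intro a _; simp [ZMod.natCast_val]
  · intro a ha; exact ZMod.val_natCast_of_lt (Finset.mem_range.mp ha)
  · intro a _; rfl


lemma sum_phC_mul_eq_zero (hd : d.Prime) {c : ZMod d} (hc : c ≠ 0) :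
    ∑ t : ZMod d, phC d (c * t) = 0 := by
  haveI : Fact d.Prime := ⟨hd⟩
  rw [← sum_phC_eq_zero hd.one_lt]
  exact Fintype.sum_equiv (Equiv.mulLeft₀ c hc) _ _ (fun t => rfl)


def Emat (d n : ℕ) (u : PhaseSpace d n) :
    Matrix (Fin n → ZMod d) (Fin n → ZMod d) ℂ := fun x y =>
  phC d (∑ i, u.1 i * x i) * (if x = y + u.2 then 1 else 0)

lemma Emat_zero : Emat d n 0 = 1 := by
  ext x y
  simp [Emat, phC_zero, Matrix.one_apply, eq_comm]

lemma weylN_eq (u : PhaseSpace d n) :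
    weylN d n u =
      (tauC d ^ (-((∑ i, (u.1 i).val * (u.2 i).val : ℕ) : ℤ))) • Emat d n u := by
  ext x y
  simp [weylN, Emat, phC, mul_assoc]

lemma Emat_mul (u v : PhaseSpace d n) :
    Emat d n u * Emat d n v
      = phC d (-(∑ i, v.1 i * u.2 i)) • Emat d n (u + v) := by
  ext x z
  rw [Matrix.mul_apply]
  simp only [Emat, Matrix.smul_apply, smul_eq_mul]
  rw [Finset.sum_eq_single (z + v.2)]
  · by_cases h : x = z + (u + v).2
    · have hx : x = (z + v.2) + u.2 := by
        rw [h]; show _ = z + v.2 + u.2; simp only [Prod.snd_add]; abel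
      rw [if_pos hx, if_pos rfl, if_pos h]
      have harg : (∑ i, u.1 i * x i) + (∑ i, v.1 i * (z + v.2) i)
          = (-(∑ i, v.1 i * u.2 i)) + (∑ i, (u + v).1 i * x i) := by
        have hz : z + v.2 = x - u.2 := by rw [hx]; abel
        rw [hz]
        simp only [Prod.fst_add, Pi.add_apply, Pi.sub_apply, Prod.snd_add]
        rw [← Finset.sum_neg_distrib, ← Finset.sum_add_distrib, ← Finset.sum_add_distrib]
        apply Finset.sum_congr rfl
        intro i _
        ring
      calc phC d (∑ i, u.1 i * x i) * 1 * (phC d (∑ i, v.1 i * (z + v.2) i) * 1)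
          = phC d ((∑ i, u.1 i * x i) + (∑ i, v.1 i * (z + v.2) i)) := by
            rw [phC_add]; ring
        _ = _ := by rw [harg, phC_add]; ring
    · have hx : x ≠ (z + v.2) + u.2 := by
        intro hc; apply h; rw [hc]
        show z + v.2 + u.2 = _
        simp only [Prod.snd_add]; abel
      rw [if_neg hx, if_neg h]; ring
  · intro y _ hy
    rw [if_neg hy]
    ring
  · intro h; exact absurd (Finset.mem_univ _) h


lemma tauC_ne_zero : tauC d ≠ 0 := by
  apply mul_ne_zero
  · exact pow_ne_zero _ (by norm_num)
  · exact Complex.exp_ne_zero _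

lemma tauC_sq (hd0 : d ≠ 0) : tauC d ^ 2 = omegaC d := by
  have : ((-1 : ℂ) ^ d) ^ 2 = 1 := by
    rw [← pow_mul, mul_comm, pow_mul]; norm_num
  rw [tauC, mul_pow, this, one_mul, ← Complex.exp_nat_mul, omegaC]
  congr 1
  ring

lemma tauC_pow_d_odd (hodd : Odd d) : tauC d ^ d = 1 := by
  have hd0 : (d : ℂ) ≠ 0 := Nat.cast_ne_zero.mpr (by rintro rfl; simp at hodd)
  rw [tauC, mul_pow, ← pow_mul, ← Complex.exp_nat_mul]
  have h1 : (d : ℂ) * (Real.pi * Complex.I / d) = Real.pi * Complex.I := by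
    field_simp
  rw [h1, Complex.exp_pi_mul_I, Odd.neg_one_pow (hodd.mul hodd)]
  ring

lemma omegaC_two : omegaC 2 = -1 := by
  rw [omegaC, show (2 * (Real.pi:ℂ) * Complex.I / (2:ℕ)) = Real.pi * Complex.I by push_cast; ring,
    Complex.exp_pi_mul_I]

lemma Emat_pow (u : PhaseSpace d n) (k : ℕ) :
    Emat d n u ^ k = phC d (-(Nat.choose k 2 : ZMod d) * ∑ i, u.1 i * u.2 i)
      • Emat d n ((k : ZMod d) • u) := by
  induction k with
  | zero => simp [Emat_zero, phC_zero]
  | succ k ih =>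
    rw [pow_succ, ih, Matrix.smul_mul, Emat_mul, smul_smul, ← phC_add]
    have h2 : ((k : ZMod d) • u + u) = (((k+1 : ℕ) : ZMod d) • u) := by
      push_cast
      rw [add_smul, one_smul]
    rw [h2]
    congr 2
    have h3 : ∑ i, u.1 i * ((k:ZMod d) • u).2 i = (k : ZMod d) * ∑ i, u.1 i * u.2 i := by
      rw [Finset.mul_sum]
      apply Finset.sum_congr rfl
      intro i _
      simp [Prod.smul_snd, smul_eq_mul]
      ring
    rw [h3]
    have h4 : ((k+1).choose 2 : ZMod d) = (k.choose 2 : ZMod d) + (k : ZMod d) := by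
      rw [Nat.choose_succ_succ, Nat.choose_one_right]
      push_cast
      ring
    rw [h4]
    ring

lemma weylN_pow_d (hd : d.Prime) (u : PhaseSpace d n) : weylN d n u ^ d = 1 := by
  set S : ℕ := ∑ i, (u.1 i).val * (u.2 i).val with hS
  rw [weylN_eq, smul_pow, Emat_pow, ZMod.natCast_self, zero_smul, Emat_zero, smul_smul]
  have hQ : (∑ i, u.1 i * u.2 i : ZMod d) = (S : ZMod d) := by
    rw [hS]
    push_cast [ZMod.natCast_val, ZMod.cast_id]
    rfl
  rw [hQ]
  have hfact : tauC d ^ (-(S:ℤ)) = ((tauC d)⁻¹) ^ S := by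
    rw [zpow_neg, zpow_natCast, inv_pow]
  suffices h : (tauC d ^ (-(S:ℤ))) ^ d * phC d (-(d.choose 2 : ZMod d) * (S : ZMod d)) = 1 by
    rw [h, one_smul]
  rcases hd.eq_two_or_odd' with h2 | hodd
  · subst h2
    have hneg : (-((2:ℕ).choose 2 : ZMod 2) * (S : ZMod 2)) = ((S:ℕ) : ZMod 2) := by
      rw [show -(((2:ℕ).choose 2 : ZMod 2)) = 1 from by decide, one_mul]
    rw [hfact, pow_right_comm, inv_pow, tauC_sq (by norm_num), omegaC_two, hneg, phC_natCast,
      omegaC_two]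
    have : ((-1 : ℂ))⁻¹ = -1 := by norm_num
    rw [this, ← pow_add]
    rw [show S + S = 2 * S by ring, pow_mul]
    norm_num
  · have hdvd : 2 ∣ d - 1 := by obtain ⟨k, hk⟩ := hodd; exact ⟨k, by omega⟩
    have hc : ((d.choose 2 : ℕ) : ZMod d) = 0 := by
      rw [ZMod.natCast_eq_zero_iff, Nat.choose_two_right,
        Nat.mul_div_assoc d hdvd]
      exact dvd_mul_right d _
    rw [hc, neg_zero, zero_mul, phC_zero, mul_one, hfact, pow_right_comm, inv_pow,
      tauC_pow_d_odd hodd]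
    norm_num


lemma weylN_commute {u u' : PhaseSpace d n} (h : sform u u' = 0) :
    Commute (weylN d n u) (weylN d n u') := by
  have key : (∑ i, u'.1 i * u.2 i) = ∑ i, u.1 i * u'.2 i := by
    have h2 : (∑ i, (u.1 i * u'.2 i - u.2 i * u'.1 i)) = 0 := h
    rw [Finset.sum_sub_distrib, sub_eq_zero] at h2
    calc (∑ i, u'.1 i * u.2 i) = ∑ i, u.2 i * u'.1 i := by
          apply Finset.sum_congr rfl; intro i _; ring
      _ = ∑ i, u.1 i * u'.2 i := h2.symm
  show _ * _ = _ * _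
  rw [weylN_eq u, weylN_eq u', smul_mul_smul_comm, smul_mul_smul_comm, Emat_mul, Emat_mul,
    key, add_comm u u']
  rw [mul_comm]

lemma list_prod_mul_of_commute {β : Type*} [Monoid β] (l : List ι) (f g : ι → β)
    (h : ∀ i j, Commute (g i) (f j)) :
    (l.map f).prod * (l.map g).prod = (l.map (fun i => f i * g i)).prod := by
  induction l with
  | nil => simp
  | cons a l ih =>
    simp only [List.map_cons, List.prod_cons]
    have hc : Commute (g a) ((l.map f).prod) := by
      apply Commute.list_prod_right
      intro x hx
      obtain ⟨j, _, rfl⟩ := List.mem_map.mp hx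
      exact h a j
    calc f a * (l.map f).prod * (g a * (l.map g).prod)
        = f a * ((l.map f).prod * g a) * (l.map g).prod := by simp [mul_assoc]
      _ = f a * (g a * (l.map f).prod) * (l.map g).prod := by rw [hc.eq]
      _ = (f a * g a) * ((l.map f).prod * (l.map g).prod) := by simp [mul_assoc]
      _ = (f a * g a) * (l.map (fun i => f i * g i)).prod := by rw [ih]

lemma pow_val_mul_pow_val {β : Type*} [Monoid β] (A : β) (hA : A ^ d = 1) (a b' : ZMod d) :
    A ^ a.val * A ^ b'.val = A ^ (a + b').val := by
  rw [← pow_add]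
  conv_lhs => rw [← Nat.div_add_mod (a.val + b'.val) d, pow_add, pow_mul, hA, one_pow, one_mul]
  rw [ZMod.val_add]

variable {M : Submodule (ZMod d) (PhaseSpace d n)} {ι : Type*} [Fintype ι]

lemma weylB_mul (hd : d.Prime) (hM1 : ∀ x ∈ M, ∀ y ∈ M, sform x y = 0)
    (b : Module.Basis ι (ZMod d) M) (m m' : M) :
    weylB b m * weylB b m' = weylB b (m + m') := by
  unfold weylB
  rw [list_prod_mul_of_commute _ _ _ (fun i j => Commute.pow_pow
    (weylN_commute (hM1 _ (SetLike.coe_mem (b i)) _ (SetLike.coe_mem (b j)))) _ _)]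
  congr 1
  apply List.map_congr_left
  intro i _
  rw [pow_val_mul_pow_val _ (weylN_pow_d hd _), map_add]
  rfl

lemma weylB_zero (b : Module.Basis ι (ZMod d) M) : weylB b (0 : M) = 1 := by
  unfold weylB
  rw [List.prod_eq_one]
  intro x hx
  obtain ⟨i, _, rfl⟩ := List.mem_map.mp hx
  rw [map_zero]
  simp


lemma exists_pow_smul_Emat (u : PhaseSpace d n) (k : ℕ) :
    ∃ c : ℂ, weylN d n u ^ k = c • Emat d n ((k : ZMod d) • u) := by
  rw [weylN_eq, smul_pow, Emat_pow, smul_smul]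
  exact ⟨_, rfl⟩

lemma exists_list_smul_Emat (r : ι → ℕ) (f : ι → PhaseSpace d n) (l : List ι) :
    ∃ c : ℂ, (l.map fun i => weylN d n (f i) ^ r i).prod
      = c • Emat d n ((l.map fun i => ((r i : ZMod d)) • f i).sum) := by
  induction l with
  | nil => exact ⟨1, by simp [Emat_zero]⟩
  | cons a l ih =>
    obtain ⟨c, hc⟩ := ih
    obtain ⟨c0, hc0⟩ := exists_pow_smul_Emat (f a) (r a)
    refine ⟨c0 * c * phC d (-(∑ i, ((List.map (fun i => ((r i : ZMod d)) • f i) l).sum.1 i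
      * (((r a : ZMod d)) • f a).2 i))), ?_⟩
    simp only [List.map_cons, List.prod_cons, List.sum_cons]
    rw [hc0, hc, smul_mul_smul_comm, Emat_mul, smul_smul]

lemma exists_weylB_smul_Emat (b : Module.Basis ι (ZMod d) M) (m : M) :
    ∃ c : ℂ, weylB b m = c • Emat d n (m : PhaseSpace d n) := by
  obtain ⟨c, hc⟩ := exists_list_smul_Emat (fun i => (b.repr m i).val)
    (fun i => (b i : PhaseSpace d n)) (Finset.univ : Finset ι).toList
  refine ⟨c, ?_⟩
  rw [weylB, hc]
  congr 1
  rw [Finset.sum_map_toList]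
  conv_rhs => rw [← b.sum_repr m]
  push_cast [ZMod.natCast_val, ZMod.cast_id]
  rfl

lemma trace_Emat_eq_zero (hd : d.Prime) {x : PhaseSpace d n} (hx : x ≠ 0) :
    (Emat d n x).trace = 0 := by
  rw [Matrix.trace]
  by_cases h2 : x.2 = 0
  · have h1 : x.1 ≠ 0 := fun h1 => hx (Prod.ext_iff.mpr ⟨h1, h2⟩)
    have key : ∀ y, Matrix.diag (Emat d n x) y = ∏ i, phC d (x.1 i * y i) := by
      intro y
      simp [Matrix.diag, Emat, h2, phC_sum]
    rw [Finset.sum_congr rfl (fun y _ => key y), ← Fintype.piFinset_univ,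
      ← Finset.prod_univ_sum (fun _ : Fin n => (Finset.univ : Finset (ZMod d)))
        (fun i t => phC d (x.1 i * t))]
    obtain ⟨i0, hi0⟩ : ∃ i, x.1 i ≠ 0 := by
      by_contra hc; push_neg at hc; exact h1 (funext hc)
    exact Finset.prod_eq_zero (Finset.mem_univ i0) (sum_phC_mul_eq_zero hd hi0)
  · apply Finset.sum_eq_zero
    intro y _
    simp [Matrix.diag, Emat, left_eq_add, h2]

lemma trace_weylB_eq_zero (hd : d.Prime) (b : Module.Basis ι (ZMod d) M) {m : M} (hm : m ≠ 0) :
    (weylB b m).trace = 0 := by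
  obtain ⟨c, hc⟩ := exists_weylB_smul_Emat b m
  rw [hc, Matrix.trace_smul, trace_Emat_eq_zero hd (by
    simpa [Submodule.coe_eq_zero] using hm), smul_zero]


lemma sform_add_right {u x y : PhaseSpace d n} : sform u (x + y) = sform u x + sform u y := by
  unfold sform
  rw [← Finset.sum_add_distrib]
  apply Finset.sum_congr rfl
  intro i _
  simp only [Prod.fst_add, Prod.snd_add, Pi.add_apply]
  ring

lemma sform_zero_right {u : PhaseSpace d n} : sform u 0 = 0 := by
  simp [sform]

end Aux

/-- For a Lagrangian subspace `M ⊆ ℤ_d^{2n}` with basis `B` and `v ∈ M`, the operator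
`ρ_{M,v} = d^{-n} Σ_{m∈M} ω^{[v,m]} w_B(m)` is a rank-one orthogonal projection:
`ρ² = ρ` and `tr ρ = 1`. -/
theorem stabRho_is_rank_one_projection (d n : ℕ) (hd : d.Prime) [NeZero d]
    (M : Submodule (ZMod d) (PhaseSpace d n)) (hM : IsLagrangian M)
    {ι : Type*} [Fintype ι] (b : Module.Basis ι (ZMod d) M)
    (v : PhaseSpace d n) (hv : v ∈ M) :
    stabRho b v * stabRho b v = stabRho b v ∧ (stabRho b v).trace = 1 := by
  haveI : Fact d.Prime := ⟨hd⟩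
  haveI : Fintype M := Fintype.ofFinite M
  set c : ℂ := ((d : ℂ) ^ n)⁻¹ with hc
  have hdc : ((d : ℂ) ^ n) ≠ 0 := pow_ne_zero n (Nat.cast_ne_zero.mpr (NeZero.ne d))
  have hcard : ((Fintype.card M : ℕ) : ℂ) = (d : ℂ) ^ n := by
    rw [Module.card_fintype b, ZMod.card, ← hM.2, Module.finrank_eq_card_basis b]
    push_cast
    rfl
  set T : Matrix (Fin n → ZMod d) (Fin n → ZMod d) ℂ :=
    ∑ m : M, phC d (sform v (m : PhaseSpace d n)) • weylB b m with hTdef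
  have hrho : stabRho b v = c • T := by
    rw [stabRho, finsum_eq_sum_of_fintype]
    rfl
  have step : ∀ m m' : M,
      (phC d (sform v (m : PhaseSpace d n)) • weylB b m)
        * (phC d (sform v (m' : PhaseSpace d n)) • weylB b m')
      = phC d (sform v ((m + m' : M) : PhaseSpace d n)) • weylB b (m + m') := by
    intro m m'
    rw [smul_mul_smul_comm, weylB_mul hd hM.1, ← phC_add]
    congr 2
    rw [Submodule.coe_add, sform_add_right]
  have hTT : T * T = ((d : ℂ) ^ n) • T := by
    rw [hTdef, Finset.sum_mul_sum]
    calc ∑ m : M, ∑ m' : M, (phC d (sform v (m : PhaseSpace d n)) • weylB b m)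
          * (phC d (sform v (m' : PhaseSpace d n)) • weylB b m')
        = ∑ _m : M, ∑ k : M, phC d (sform v (k : PhaseSpace d n)) • weylB b k := by
          refine Finset.sum_congr rfl (fun m _ => ?_)
          rw [Finset.sum_congr rfl (fun m' _ => step m m')]
          exact Fintype.sum_equiv (Equiv.addLeft m) _ _ (fun k => rfl)
      _ = (Fintype.card M) • ∑ k : M, phC d (sform v (k : PhaseSpace d n)) • weylB b k := by
          rw [Finset.sum_const, Finset.card_univ]
      _ = ((d : ℂ) ^ n) • ∑ k : M, phC d (sform v (k : PhaseSpace d n)) • weylB b k := by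
          rw [← Nat.cast_smul_eq_nsmul ℂ, hcard]
  have htrT : T.trace = (d : ℂ) ^ n := by
    rw [hTdef, Matrix.trace_sum]
    rw [Finset.sum_eq_single (0 : M)]
    · rw [Submodule.coe_zero, sform_zero_right, phC_zero, weylB_zero, one_smul,
        Matrix.trace_one]
      simp [ZMod.card]
    · intro m _ hm
      rw [Matrix.trace_smul, trace_weylB_eq_zero hd b hm, smul_zero]
    · intro h
      exact absurd (Finset.mem_univ _) h
  constructor
  · rw [hrho, smul_mul_smul_comm, hTT, smul_smul, hc]
    congr 1
    field_simp
  · rw [hrho, Matrix.trace_smul, htrT, hc, smul_eq_mul, inv_mul_cancel₀ hdc]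
end
end

section
/- For prime d and n ≥ 1, the number of stabilizer states in (C^d)^{⊗n} equals S(d,n) = d^n · Π_{j=1}^n (d^j + 1). Equivalently, this is d^n times the number of Lagrangian subspaces of Z_d^{2n}. -/
open Module Submodule Set

section Bilin
variable {d n : ℕ}

def sformBilin (d n : ℕ) : LinearMap.BilinForm (ZMod d) (PhaseSpace d n) :=
  LinearMap.mk₂ (ZMod d) sform
    (fun x y z => by
      simp only [sform, Prod.fst_add, Prod.snd_add, Pi.add_apply, ← Finset.sum_add_distrib]
      exact Finset.sum_congr rfl fun i _ => by ring)
    (fun c x y => by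
      simp only [sform, Prod.smul_fst, Prod.smul_snd, Pi.smul_apply, smul_eq_mul,
        Finset.mul_sum]
      exact Finset.sum_congr rfl fun i _ => by ring)
    (fun x y z => by
      simp only [sform, Prod.fst_add, Prod.snd_add, Pi.add_apply, ← Finset.sum_add_distrib]
      exact Finset.sum_congr rfl fun i _ => by ring)
    (fun c x y => by
      simp only [sform, Prod.smul_fst, Prod.smul_snd, Pi.smul_apply, smul_eq_mul,
        Finset.mul_sum]
      exact Finset.sum_congr rfl fun i _ => by ring)

@[simp] lemma sformBilin_apply (x y : PhaseSpace d n) : sformBilin d n x y = sform x y := rfl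

lemma sform_self (x : PhaseSpace d n) : sform x x = 0 :=
  Finset.sum_eq_zero fun i _ => by ring

lemma sform_skew (x y : PhaseSpace d n) : sform y x = - sform x y := by
  rw [sform, sform, ← Finset.sum_neg_distrib]
  exact Finset.sum_congr rfl fun i _ => by ring

lemma sform_refl : (sformBilin d n).IsRefl := by
  intro x y h
  show sform y x = 0
  rw [sform_skew]
  simpa using h

lemma sform_nondeg : (sformBilin d n).Nondegenerate := by
  refine (LinearMap.IsRefl.nondegenerate_iff_separatingLeft (B := sformBilin d n) sform_refl).2 ?_
  intro x hx
  have h1 : ∀ i, x.1 i = 0 := by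
    intro i
    have := hx (0, Pi.single i 1)
    simpa [sform, Pi.single_apply, Finset.sum_ite_eq'] using this
  have h2 : ∀ i, x.2 i = 0 := by
    intro i
    have := hx (Pi.single i 1, 0)
    simpa [sform, Pi.single_apply, Finset.sum_ite_eq'] using this
  exact Prod.ext (funext h1) (funext h2)

lemma mem_orth_span_iff (S : Set (PhaseSpace d n)) (v : PhaseSpace d n) :
    v ∈ (sformBilin d n).orthogonal (span (ZMod d) S) ↔ ∀ u ∈ S, sform u v = 0 := by
  constructor
  · intro h u hu
    exact h u (subset_span hu)
  · intro h u hu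
    induction hu using span_induction with
    | mem x hx => exact h x hx
    | zero => simp [LinearMap.BilinForm.IsOrtho]
    | add x y hx hy ihx ihy =>
        show sformBilin d n (x + y) v = 0
        rw [map_add, LinearMap.add_apply, ihx, ihy, add_zero]
    | smul a x hx ihx =>
        show sformBilin d n (a • x) v = 0
        rw [map_smul, LinearMap.smul_apply, ihx, smul_zero]

end Bilin

section Count
variable {d n : ℕ} [Fact (Nat.Prime d)]

lemma card_mod (W : Type*) [AddCommGroup W] [Module (ZMod d) W] [Finite W] :
    Nat.card W = d ^ Module.finrank (ZMod d) W := by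
  have : Fintype W := Fintype.ofFinite W
  rw [Nat.card_eq_fintype_card, card_eq_pow_finrank (K := ZMod d), ZMod.card]

lemma frV : Module.finrank (ZMod d) (PhaseSpace d n) = 2 * n := by
  simp [Module.finrank_prod, two_mul]

abbrev IsoT (d n k : ℕ) : Type _ :=
  {f : Fin k → PhaseSpace d n // LinearIndependent (ZMod d) f ∧
    ∀ i j, sform (f i) (f j) = 0}


lemma sform_span_right {S : Set (PhaseSpace d n)} {v : PhaseSpace d n}
    (h : ∀ u ∈ S, sform v u = 0) : ∀ x ∈ span (ZMod d) S, sform v x = 0 := by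
  intro x hx
  induction hx using span_induction with
  | mem x hx => exact h x hx
  | zero => exact map_zero (sformBilin d n v)
  | add x y hx hy ihx ihy =>
      rw [show sform v (x + y) = sformBilin d n v (x + y) from rfl, map_add]
      simp only [sformBilin_apply] at *
      rw [ihx, ihy, add_zero]
  | smul a x hx ihx =>
      rw [show sform v (a • x) = sformBilin d n v (a • x) from rfl, map_smul]
      simp only [sformBilin_apply, smul_eq_mul] at *
      rw [ihx, mul_zero]

lemma span_le_orth {k : ℕ} (s : IsoT d n k) :
    span (ZMod d) (Set.range s.1) ≤
      (sformBilin d n).orthogonal (span (ZMod d) (Set.range s.1)) := by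
  intro x hx
  rw [mem_orth_span_iff]
  rintro u ⟨i, rfl⟩
  exact sform_span_right (fun w hw => by obtain ⟨j, rfl⟩ := hw; exact s.2.2 i j) x hx

def stepEquiv (k : ℕ) : IsoT d n (k+1) ≃
    Σ s : IsoT d n k, {v : PhaseSpace d n //
        v ∈ (sformBilin d n).orthogonal (span (ZMod d) (Set.range s.1)) ∧
        v ∉ span (ZMod d) (Set.range s.1)} where
  toFun f := ⟨⟨Fin.init f.1, f.2.1.comp Fin.castSucc (Fin.castSucc_injective k),
      fun i j => f.2.2 _ _⟩,
    ⟨f.1 (Fin.last k), by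
      constructor
      · rw [mem_orth_span_iff]
        rintro u ⟨i, rfl⟩
        exact f.2.2 _ _
      · have := f.2.1
        rw [← Fin.snoc_init_self f.1, linearIndependent_fin_snoc] at this
        exact this.2⟩⟩
  invFun x := ⟨Fin.snoc x.1.1 x.2.1, by
      rw [linearIndependent_fin_snoc]
      exact ⟨x.1.2.1, x.2.2.2⟩, by
      intro i j
      induction i using Fin.lastCases with
      | last =>
        induction j using Fin.lastCases with
        | last => simpa [Fin.snoc_last] using sform_self x.2.1
        | cast j' =>
          rw [Fin.snoc_last, Fin.snoc_castSucc, sform_skew,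
            show sform (x.1.1 j') x.2.1 = 0 from
              x.2.2.1 _ (subset_span (Set.mem_range_self j')), neg_zero]
      | cast i' =>
        induction j using Fin.lastCases with
        | last =>
          rw [Fin.snoc_castSucc, Fin.snoc_last]
          exact x.2.2.1 _ (subset_span (Set.mem_range_self i'))
        | cast j' =>
          rw [Fin.snoc_castSucc, Fin.snoc_castSucc]
          exact x.1.2.2 i' j'⟩
  left_inv f := Subtype.ext (Fin.snoc_init_self f.1)
  right_inv := by
    rintro ⟨⟨s, hs⟩, ⟨v, hv⟩⟩
    have h1 : Fin.init (α := fun _ => PhaseSpace d n) (Fin.snoc s v) = s := by simp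
    refine Sigma.ext (Subtype.ext h1) ?_
    refine (Subtype.heq_iff_coe_eq ?_).mpr (by simp)
    intro x
    dsimp only
    rw [h1]

lemma card_sigma_const {ι : Type*} [Finite ι] {F : ι → Type*} [∀ i, Finite (F i)] {c : ℕ}
    (h : ∀ i, Nat.card (F i) = c) : Nat.card (Σ i, F i) = Nat.card ι * c := by
  have : Fintype ι := Fintype.ofFinite ι
  have : ∀ i, Fintype (F i) := fun i => Fintype.ofFinite _
  have h' : ∀ i, Fintype.card (F i) = c := fun i => by rw [← Nat.card_eq_fintype_card, h]
  rw [Nat.card_eq_fintype_card, Fintype.card_sigma, Nat.card_eq_fintype_card]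
  simp [h', Finset.sum_const, Finset.card_univ, mul_comm]

set_option maxHeartbeats 1000000 in
lemma card_fiber {k : ℕ} (hk : k ≤ n) (s : IsoT d n k) :
    Nat.card {v : PhaseSpace d n //
        v ∈ (sformBilin d n).orthogonal (span (ZMod d) (Set.range s.1)) ∧
        v ∉ span (ZMod d) (Set.range s.1)} = d ^ (2*n - k) - d ^ k := by
  set W := span (ZMod d) (Set.range s.1) with hWdef
  set O := (sformBilin d n).orthogonal W with hOdef
  have hW : Module.finrank (ZMod d) W = k := by
    rw [hWdef, finrank_span_eq_card s.2.1, Fintype.card_fin]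
  have hO : Module.finrank (ZMod d) O = 2*n - k := by
    rw [hOdef, LinearMap.BilinForm.finrank_orthogonal sform_nondeg, frV, hW]
  have hsub : (W : Set (PhaseSpace d n)) ⊆ (O : Set (PhaseSpace d n)) := span_le_orth s
  have e : {v : PhaseSpace d n // v ∈ O ∧ v ∉ W} ≃
      ((O : Set (PhaseSpace d n)) \ (W : Set (PhaseSpace d n)) : Set (PhaseSpace d n)) :=
    Equiv.subtypeEquivRight fun v => (Set.mem_diff v).symm
  rw [Nat.card_congr e, Nat.card_coe_set_eq, Set.ncard_diff hsub]
  have c1 : (O : Set (PhaseSpace d n)).ncard = d ^ (2*n - k) := by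
    rw [← Nat.card_coe_set_eq]
    have := card_mod (d := d) O
    rw [hO] at this
    exact this
  have c2 : (W : Set (PhaseSpace d n)).ncard = d ^ k := by
    rw [← Nat.card_coe_set_eq]
    have := card_mod (d := d) W
    rw [hW] at this
    exact this
  rw [c1, c2]

lemma card_isoT : ∀ k, k ≤ n → Nat.card (IsoT d n k) =
    ∏ i ∈ Finset.range k, (d ^ (2*n - i) - d ^ i) := by
  intro k
  induction k with
  | zero =>
    intro _
    have : Unique (IsoT d n 0) :=
      { default := ⟨fun i => i.elim0, linearIndependent_empty_type, fun i => i.elim0⟩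
        uniq := fun a => Subtype.ext (funext fun i => i.elim0) }
    simp [Nat.card_unique]
  | succ k ih =>
    intro hk
    rw [Nat.card_congr (stepEquiv k), card_sigma_const (fun s => card_fiber (le_of_lt hk) s),
      ih (le_of_lt hk), Finset.prod_range_succ]

end Count

section Lag
variable {d n : ℕ} [Fact (Nat.Prime d)]

def Phi (d n : ℕ) [Fact (Nat.Prime d)] (f : IsoT d n n) :
    {M : Submodule (ZMod d) (PhaseSpace d n) // IsLagrangian M} :=
  ⟨span (ZMod d) (Set.range f.1), by
    constructor
    · intro x hx y hy
      exact span_le_orth f hy x hx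
    · rw [finrank_span_eq_card f.2.1, Fintype.card_fin]⟩

def fiberEquiv (M : {M : Submodule (ZMod d) (PhaseSpace d n) // IsLagrangian M}) :
    {f : IsoT d n n // Phi d n f = M} ≃ {g : Fin n → M.1 // LinearIndependent (ZMod d) g} where
  toFun f := ⟨fun i => ⟨f.1.1 i, by
      have h := congrArg Subtype.val f.2
      rw [← h]
      exact subset_span (Set.mem_range_self i)⟩,
    LinearIndependent.of_comp M.1.subtype f.1.2.1⟩
  invFun g := ⟨⟨fun i => (g.1 i : PhaseSpace d n),
      g.2.map' M.1.subtype (Submodule.ker_subtype _),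
      fun i j => M.2.1 _ (g.1 i).2 _ (g.1 j).2⟩, by
    apply Subtype.ext
    show span (ZMod d) (Set.range fun i => (g.1 i : PhaseSpace d n)) = M.1
    have hli : LinearIndependent (ZMod d) fun i => (g.1 i : PhaseSpace d n) :=
      g.2.map' M.1.subtype (Submodule.ker_subtype _)
    apply Submodule.eq_of_le_of_finrank_le
    · rw [span_le]
      rintro x ⟨i, rfl⟩
      exact (g.1 i).2
    · rw [finrank_span_eq_card hli, Fintype.card_fin, M.2.2]⟩
  left_inv f := Subtype.ext (Subtype.ext (funext fun i => rfl))
  right_inv g := Subtype.ext (funext fun i => Subtype.ext rfl)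

lemma card_lag_mul :
    Nat.card {M : Submodule (ZMod d) (PhaseSpace d n) // IsLagrangian M} *
      ∏ i ∈ Finset.range n, (d ^ n - d ^ i) =
    ∏ i ∈ Finset.range n, (d ^ (2*n - i) - d ^ i) := by
  haveI : Finite (Submodule (ZMod d) (PhaseSpace d n)) :=
    Finite.of_injective (fun M => (M : Set (PhaseSpace d n))) SetLike.coe_injective
  have e : IsoT d n n ≃ Σ M : {M : Submodule (ZMod d) (PhaseSpace d n) // IsLagrangian M},
      {f : IsoT d n n // Phi d n f = M} := (Equiv.sigmaFiberEquiv (Phi d n)).symm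
  have hfib : ∀ M : {M : Submodule (ZMod d) (PhaseSpace d n) // IsLagrangian M},
      Nat.card {f : IsoT d n n // Phi d n f = M} =
        ∏ i ∈ Finset.range n, (d ^ n - d ^ i) := by
    intro M
    rw [Nat.card_congr (fiberEquiv M), card_linearIndependent (le_of_eq M.2.2.symm)]
    rw [← Fin.prod_univ_eq_prod_range]
    exact Finset.prod_congr rfl fun i _ => by rw [ZMod.card, M.2.2]
  haveI : Finite (IsoT d n n) := inferInstance
  haveI hFin : ∀ M : {M : Submodule (ZMod d) (PhaseSpace d n) // IsLagrangian M},
      Finite {f : IsoT d n n // Phi d n f = M} := fun M => inferInstance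
  rw [← card_isoT n le_rfl, Nat.card_congr e]
  exact (card_sigma_const hfib).symm

end Lag

lemma arith (d n : ℕ) (hd : 2 ≤ d) :
    ∏ i ∈ Finset.range n, (d ^ (2*n - i) - d ^ i) =
      (∏ i ∈ Finset.range n, (d ^ n - d ^ i)) * ∏ j ∈ Finset.Icc 1 n, (d ^ j + 1) := by
  have h1 : ∏ j ∈ Finset.Icc 1 n, (d ^ j + 1) =
      ∏ i ∈ Finset.range n, (d ^ (i+1) + 1) := by
    induction n with
    | zero => simp
    | succ m ih =>
      rw [Finset.prod_Icc_succ_top (Nat.le_add_left 1 m), ih, Finset.prod_range_succ]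
  have h2 : ∏ i ∈ Finset.range n, (d ^ (i+1) + 1) =
      ∏ i ∈ Finset.range n, (d ^ (n-i) + 1) := by
    rw [← Finset.prod_range_reflect]
    refine Finset.prod_congr rfl fun i hi => ?_
    rw [Finset.mem_range] at hi
    congr 2
    omega
  rw [h1, h2, ← Finset.prod_mul_distrib]
  refine Finset.prod_congr rfl fun i hi => ?_
  rw [Finset.mem_range] at hi
  have e1 : d ^ n * d ^ (n-i) = d ^ (2*n-i) := by rw [← pow_add]; congr 1; omega
  have e2 : d ^ i * d ^ (n-i) = d ^ n := by rw [← pow_add]; congr 1; omega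
  have l1 : d ^ i ≤ d ^ n := Nat.pow_le_pow_right (by omega) (by omega)
  have l2 : d ^ n ≤ d ^ (2*n-i) := Nat.pow_le_pow_right (by omega) (by omega)
  zify [l1, le_trans l1 l2]
  have ze1 : (d:ℤ) ^ n * d ^ (n-i) = d ^ (2*n-i) := by exact_mod_cast e1
  have ze2 : (d:ℤ) ^ i * d ^ (n-i) = d ^ n := by exact_mod_cast e2
  linear_combination ze2 - ze1

lemma card_lag {d n : ℕ} [Fact (Nat.Prime d)] :
    Nat.card {M : Submodule (ZMod d) (PhaseSpace d n) // IsLagrangian M} =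
      ∏ j ∈ Finset.Icc 1 n, (d ^ j + 1) := by
  have hd2 : 2 ≤ d := (Fact.out : d.Prime).two_le
  have hpos : 0 < ∏ i ∈ Finset.range n, (d ^ n - d ^ i) := by
    refine Finset.prod_pos fun i hi => ?_
    have := Nat.pow_lt_pow_right (show 1 < d by omega) (Finset.mem_range.1 hi)
    omega
  refine Nat.eq_of_mul_eq_mul_right hpos ?_
  rw [card_lag_mul, arith d n hd2, mul_comm]

/-- **Number of stabilizer states.** A stabilizer state in `(ℂ^d)^{⊗n}` is specified
by a Lagrangian subspace `M ⊆ ℤ_d^{2n}` together with a coset in `V/M` (distinct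
pairs give distinct states). For prime `d` and `n ≥ 1`, their number equals
`S(d,n) = d^n · Π_{j=1}^n (d^j + 1)`, i.e. `d^n` times the number of Lagrangians. -/
theorem card_stabilizer_states (d n : ℕ) (hd : d.Prime) (hn : 1 ≤ n) :
    Nat.card ((M : {M : Submodule (ZMod d) (PhaseSpace d n) // IsLagrangian M}) ×
        (PhaseSpace d n ⧸ M.1))
      = d ^ n * ∏ j ∈ Finset.Icc 1 n, (d ^ j + 1) := by
  haveI : Fact d.Prime := ⟨hd⟩
  haveI : Finite (Submodule (ZMod d) (PhaseSpace d n)) :=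
    Finite.of_injective (fun M => (M : Set (PhaseSpace d n))) SetLike.coe_injective
  have hq : ∀ M : {M : Submodule (ZMod d) (PhaseSpace d n) // IsLagrangian M},
      Nat.card (PhaseSpace d n ⧸ M.1) = d ^ n := by
    intro M
    rw [card_mod (d := d)]
    congr 1
    have h := Submodule.finrank_quotient_add_finrank M.1
    rw [frV, M.2.2] at h
    omega
  rw [card_sigma_const hq, card_lag, mul_comm]
end

section
/- Define F_t(d,n) = S(d,n)^{-1} Σ_{k=0}^n binom(n,k)_d d^{(n-k)(n-k+3-2t)/2} with S(d,n) = d^n Π_{j=1}^n (d^j+1). Then F_t(d,1) = (d^{2-t}+1)/((d+1)d) and F_t(d,n+1)/F_t(d,n) = (d^{n-(t-2)}+1)/(d(d^{n+1}+1)) for all primes d, n ≥ 1, t ≥ 1. -/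
/-- The Gaussian binomial coefficient `binom(n,k)_d`. -/
noncomputable def gbinom (d n k : ℕ) : ℚ :=
  if k ≤ n then ∏ i ∈ Finset.range k, ((d : ℚ) ^ (n - i) - 1) / ((d : ℚ) ^ (k - i) - 1)
  else 0

/-- `S(d,n) = d^n · Π_{j=1}^n (d^j + 1)`, the number of stabilizer states in
dimension `d^n`. -/
def Scard (d n : ℕ) : ℕ := d ^ n * ∏ j ∈ Finset.Icc 1 n, (d ^ j + 1)

/-- The `t`-th frame potential of the stabilizer states in dimension `d^n`:
`F_t(d,n) = S(d,n)⁻¹ Σ_{k=0}^n binom(n,k)_d d^{(n-k)(n-k+3-2t)/2}`. -/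
noncomputable def framePot (d t n : ℕ) : ℚ :=
  (Scard d n : ℚ)⁻¹ * ∑ k ∈ Finset.range (n + 1),
    gbinom d n k * (d : ℚ) ^ ((((n : ℤ) - k) * ((n : ℤ) - k + 3 - 2 * t)) / 2)

noncomputable def Pfun (d n : ℕ) : ℚ := ∏ j ∈ Finset.range n, ((d : ℚ) ^ (j + 1) - 1)

theorem Pfun_pos {d : ℕ} (hq : (1:ℚ) < d) (n : ℕ) : 0 < Pfun d n := by
  apply Finset.prod_pos
  intro j _
  have : (1:ℚ) < (d:ℚ) ^ (j+1) := one_lt_pow₀ hq (by omega)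
  linarith

theorem Pfun_succ (d n : ℕ) : Pfun d (n+1) = Pfun d n * ((d:ℚ)^(n+1) - 1) :=
  Finset.prod_range_succ _ _

theorem gbinom_eq {d : ℕ} (hq : (1:ℚ) < d) {n k : ℕ} (hk : k ≤ n) :
    gbinom d n k = Pfun d n / (Pfun d k * Pfun d (n - k)) := by
  rw [gbinom, if_pos hk, Finset.prod_div_distrib]
  have h1 : ∏ i ∈ Finset.range k, ((d:ℚ)^(k - i) - 1) = Pfun d k := by
    rw [Pfun, ← Finset.prod_range_reflect]
    apply Finset.prod_congr rfl
    intro i hi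
    simp only [Finset.mem_range] at hi
    congr 2
    omega
  have h2 : Pfun d n = Pfun d (n - k) * ∏ i ∈ Finset.range k, ((d:ℚ)^(n - i) - 1) := by
    conv_lhs => rw [Pfun, show n = (n - k) + k from by omega, Finset.prod_range_add]
    rw [Pfun]
    congr 1
    rw [← Finset.prod_range_reflect]
    apply Finset.prod_congr rfl
    intro i hi
    simp only [Finset.mem_range] at hi
    congr 2
    omega
  have hPk := Pfun_pos hq k
  have hPnk := Pfun_pos hq (n - k)
  rw [h1, h2]
  field_simp

theorem gbinom_zero (d n : ℕ) : gbinom d n 0 = 1 := by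
  simp [gbinom]

theorem gbinom_pos {d : ℕ} (hq : (1:ℚ) < d) {n k : ℕ} (hk : k ≤ n) : 0 < gbinom d n k := by
  rw [gbinom_eq hq hk]
  exact div_pos (Pfun_pos hq n) (mul_pos (Pfun_pos hq k) (Pfun_pos hq (n - k)))

theorem gbinom_of_gt {d n k : ℕ} (h : n < k) : gbinom d n k = 0 := by
  rw [gbinom, if_neg (by omega)]

theorem pascal {d : ℕ} (hq : (1:ℚ) < d) {n j : ℕ} (hj : j ≤ n) :
    gbinom d (n+1) (j+1) = (d:ℚ)^(j+1) * gbinom d n (j+1) + gbinom d n j := by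
  rcases eq_or_lt_of_le hj with h | h
  · subst h
    rw [gbinom_of_gt (Nat.lt_succ_self j), gbinom_eq hq (le_refl (j+1)), gbinom_eq hq (le_refl j)]
    have h0 : Pfun d 0 = 1 := by simp [Pfun]
    simp only [Nat.sub_self, h0, mul_one, mul_zero, zero_add,
      div_self (Pfun_pos hq (j+1)).ne', div_self (Pfun_pos hq j).ne']
  · have hjn : j + 1 ≤ n := by omega
    rw [gbinom_eq hq (by omega : j + 1 ≤ n + 1), gbinom_eq hq hjn, gbinom_eq hq hj]
    have e1 : n + 1 - (j+1) = n - j := by omega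
    have e2 : n - (j+1) = (n - j) - 1 := by omega
    rw [e1, e2, Pfun_succ d n, Pfun_succ d j]
    rw [show Pfun d (n-j) = Pfun d ((n-j)-1) * ((d:ℚ)^((n-j-1)+1) - 1) from by
      rw [← Pfun_succ]; congr 1; omega]
    have hpow : (d:ℚ)^(n+1) = (d:ℚ)^(j+1) * (d:ℚ)^((n-j-1)+1) := by
      rw [← pow_add]; congr 1; omega
    have hPn := (Pfun_pos hq n).ne'
    have hPj := (Pfun_pos hq j).ne'
    have hPnj := (Pfun_pos hq (n-j-1)).ne'
    have hq1 : (d:ℚ)^(j+1) - 1 ≠ 0 := by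
      have : (1:ℚ) < (d:ℚ)^(j+1) := one_lt_pow₀ hq (by omega); linarith
    have hq2 : (d:ℚ)^((n-j-1)+1) - 1 ≠ 0 := by
      have : (1:ℚ) < (d:ℚ)^((n-j-1)+1) := one_lt_pow₀ hq (by omega); linarith
    field_simp
    rw [hpow]
    ring

theorem even_key (m s : ℤ) : ∃ c : ℤ, m * (m + 3 - 2 * s) = 2 * c := by
  obtain ⟨r, hr⟩ := Int.even_mul_succ_self m
  exact ⟨r + m * (1 - s), by linear_combination hr⟩

theorem exp_shift (n k t : ℕ) :
    ((((n:ℤ)+1) - ((k:ℤ)+1)) * (((n:ℤ)+1) - ((k:ℤ)+1) + 3 - 2*t)) / 2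
      = (((n:ℤ) - k) * ((n:ℤ) - k + 3 - 2*t)) / 2 := by
  congr 1 <;> ring

theorem exp_succ (n k t : ℕ) :
    (k:ℤ) + ((((n:ℤ)+1) - k) * (((n:ℤ)+1) - k + 3 - 2*t)) / 2
      = (((n:ℤ) - k) * ((n:ℤ) - k + 3 - 2*t)) / 2 + ((n:ℤ) + 2 - t) := by
  obtain ⟨c, hc⟩ := even_key ((n:ℤ) - k) t
  have h1 : (((n:ℤ)+1) - k) * (((n:ℤ)+1) - k + 3 - 2*t)
      = 2 * (c + ((n:ℤ) - k + 2 - t)) := by linear_combination hc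
  rw [hc, h1, Int.mul_ediv_cancel_left _ two_ne_zero, Int.mul_ediv_cancel_left _ two_ne_zero]
  ring

noncomputable def Gsum (d t n : ℕ) : ℚ :=
  ∑ k ∈ Finset.range (n + 1),
    gbinom d n k * (d : ℚ) ^ ((((n : ℤ) - k) * ((n : ℤ) - k + 3 - 2 * t)) / 2)

theorem framePot_eq (d t n : ℕ) : framePot d t n = (Scard d n : ℚ)⁻¹ * Gsum d t n := rfl

theorem Gsum_pos {d : ℕ} (hq : (1:ℚ) < d) (t n : ℕ) : 0 < Gsum d t n := by
  apply Finset.sum_pos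
  · intro k hk
    simp only [Finset.mem_range] at hk
    exact mul_pos (gbinom_pos hq (by omega)) (zpow_pos (by linarith) _)
  · exact ⟨0, by simp⟩

theorem Gsum_succ {d : ℕ} (hq : (1:ℚ) < d) (t n : ℕ) :
    Gsum d t (n+1) = ((d:ℚ) ^ ((n:ℤ) + 2 - t) + 1) * Gsum d t n := by
  have hd0 : (d:ℚ) ≠ 0 := by linarith
  rw [Gsum, Finset.sum_range_succ']
  have hterm : ∀ i ∈ Finset.range (n+1),
      gbinom d (n+1) (i+1) *
        (d:ℚ) ^ (((((n+1:ℕ):ℤ)) - ((i+1:ℕ):ℤ)) * ((((n+1:ℕ):ℤ)) - ((i+1:ℕ):ℤ) + 3 - 2*t) / 2)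
      = (d:ℚ)^(i+1) * gbinom d n (i+1) *
          (d:ℚ) ^ (((((n+1:ℕ):ℤ)) - ((i+1:ℕ):ℤ)) * ((((n+1:ℕ):ℤ)) - ((i+1:ℕ):ℤ) + 3 - 2*t) / 2)
        + gbinom d n i * (d:ℚ) ^ ((((n:ℤ) - i) * ((n:ℤ) - i + 3 - 2*t)) / 2) := by
    intro i hi
    simp only [Finset.mem_range] at hi
    rw [pascal hq (by omega : i ≤ n), add_mul]
    congr 1
    push_cast
    rw [exp_shift]
  rw [Finset.sum_congr rfl hterm, Finset.sum_add_distrib]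
  have key : (∑ x ∈ Finset.range (n + 1),
        (d:ℚ) ^ (x + 1) * gbinom d n (x + 1) *
          (d:ℚ) ^ ((((n+1:ℕ):ℤ) - ((x+1:ℕ):ℤ)) * (((n+1:ℕ):ℤ) - ((x+1:ℕ):ℤ) + 3 - 2 * (t:ℤ)) / 2))
      + gbinom d (n+1) 0 *
          (d:ℚ) ^ ((((n+1:ℕ):ℤ) - ((0:ℕ):ℤ)) * (((n+1:ℕ):ℤ) - ((0:ℕ):ℤ) + 3 - 2 * (t:ℤ)) / 2)
      = (d:ℚ) ^ ((n:ℤ) + 2 - (t:ℤ)) * Gsum d t n := by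
    have e := Finset.sum_range_succ' (fun k : ℕ => (d:ℚ) ^ k * gbinom d n k *
      (d:ℚ) ^ ((((n+1:ℕ):ℤ) - (k:ℤ)) * (((n+1:ℕ):ℤ) - (k:ℤ) + 3 - 2 * (t:ℤ)) / 2)) (n+1)
    rw [show gbinom d (n+1) 0 = (d:ℚ) ^ (0:ℕ) * gbinom d n 0 from by simp [gbinom_zero],
      ← e, Finset.sum_range_succ, gbinom_of_gt (Nat.lt_succ_self n), Gsum, Finset.mul_sum]
    rw [mul_zero, zero_mul, add_zero]
    apply Finset.sum_congr rfl
    intro k hk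
    rw [← zpow_natCast (d:ℚ) k, mul_comm ((d:ℚ) ^ (k:ℤ)) (gbinom d n k), mul_assoc,
      ← zpow_add₀ hd0]
    push_cast
    rw [exp_succ n k t, zpow_add₀ hd0]
    ring
  have h2 : (∑ x ∈ Finset.range (n + 1),
      gbinom d n x * (d:ℚ) ^ (((n:ℤ) - (x:ℤ)) * ((n:ℤ) - (x:ℤ) + 3 - 2 * (t:ℤ)) / 2))
      = Gsum d t n := rfl
  push_cast at key ⊢
  linarith [key]

theorem Scard_succ (d n : ℕ) : Scard d (n+1) = d * (d ^ (n+1) + 1) * Scard d n := by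
  rw [Scard, Scard, Finset.prod_Icc_succ_top (by omega : 1 ≤ n + 1), pow_succ]
  ring

/-- **Recursion formula for the stabilizer frame potential.** For prime `d` and
`t ≥ 1`: `F_t(d,1) = (d^{2-t}+1)/((d+1)d)` and, for all `n ≥ 1`,
`F_t(d,n+1)/F_t(d,n) = (d^{n-(t-2)}+1)/(d(d^{n+1}+1))`. -/
theorem framePot_recursion (d t : ℕ) (hd : d.Prime) (ht : 1 ≤ t) :
    framePot d t 1 = ((d : ℚ) ^ ((2 : ℤ) - t) + 1) / (((d : ℚ) + 1) * d) ∧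
    ∀ n : ℕ, 1 ≤ n →
      framePot d t (n + 1) / framePot d t n
        = ((d : ℚ) ^ ((n : ℤ) - ((t : ℤ) - 2)) + 1) / ((d : ℚ) * ((d : ℚ) ^ (n + 1) + 1)) := by
  have hd2 : 2 ≤ d := hd.two_le
  have hq : (1:ℚ) < d := by exact_mod_cast Nat.one_lt_cast.mpr (by omega)
  have hd0 : (d:ℚ) ≠ 0 := by linarith
  constructor
  · rw [framePot, Finset.sum_range_succ, Finset.sum_range_succ, Finset.sum_range_zero]
    have hb0 : gbinom d 1 0 = 1 := gbinom_zero d 1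
    have hb1 : gbinom d 1 1 = 1 := by
      rw [gbinom, if_pos le_rfl]
      have : (d:ℚ) - 1 ≠ 0 := by linarith
      simp [div_self this]
    have hS : (Scard d 1 : ℚ) = (d : ℚ) * ((d:ℚ) + 1) := by
      simp [Scard]
    have he0 : (((1:ℕ):ℤ) - ((0:ℕ):ℤ)) * (((1:ℕ):ℤ) - ((0:ℕ):ℤ) + 3 - 2 * (t:ℤ)) / 2
        = 2 - (t:ℤ) := by
      push_cast
      omega
    have he1 : (((1:ℕ):ℤ) - ((1:ℕ):ℤ)) * (((1:ℕ):ℤ) - ((1:ℕ):ℤ) + 3 - 2 * (t:ℤ)) / 2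
        = 0 := by push_cast; simp
    rw [hb0, hb1, hS]
    push_cast at he0 he1 ⊢
    rw [he0, he1]
    simp only [one_mul, zero_add, zpow_zero]
    rw [inv_mul_eq_div, div_eq_div_iff (by positivity) (by positivity)]
    ring
  · intro n hn
    have hGpos := Gsum_pos hq t n
    have hSpos : (0:ℚ) < (Scard d n : ℚ) := by
      have : 0 < Scard d n := by
        apply Nat.mul_pos (Nat.pow_pos (by omega))
        apply Finset.prod_pos
        intro j _
        positivity
      exact_mod_cast this
    rw [framePot_eq, framePot_eq, Gsum_succ hq]
    have hScast : (Scard d (n+1) : ℚ) = (d:ℚ) * ((d:ℚ) ^ (n+1) + 1) * (Scard d n : ℚ) := by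
      rw [Scard_succ]; push_cast; ring
    rw [hScast]
    have hdp : (0:ℚ) < (d:ℚ) ^ (n+1) + 1 := by positivity
    have hexp : (n:ℤ) - ((t:ℤ) - 2) = (n:ℤ) + 2 - (t:ℤ) := by ring
    rw [hexp]
    field_simp
end

section
/- For prime d and all n ≥ 1, F_2(d,n) = W_2(d^n), where F_t(d,n) = S(d,n)^{-1} Σ_{k=0}^n binom(n,k)_d d^{(n-k)(n-k+3-2t)/2}, S(d,n) = d^n Π_{j=1}^n (d^j+1), and W_t(D) = binom(D+t-1, t)^{-1}. That is, the frame potential of stabilizer states meets the order-2 Welch bound, so stabilizer states form a complex projective 2-design. -/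
/-- The Welch bound `W_t(D) = binom(D+t-1, t)⁻¹`, the minimal `t`-th frame potential
in dimension `D`; it is met exactly by complex projective `t`-designs. -/
noncomputable def welch (t D : ℕ) : ℚ := ((D + t - 1).choose t : ℚ)⁻¹

open Finset

namespace StabTwo

/-- numerator product -/
noncomputable def nump (d n k : ℕ) : ℚ := ∏ i ∈ range k, ((d : ℚ) ^ (n - i) - 1)

/-- q-factorial-like denominator -/
noncomputable def facp (d k : ℕ) : ℚ := ∏ i ∈ range k, ((d : ℚ) ^ (i + 1) - 1)

lemma one_lt_q {d : ℕ} (hd : 2 ≤ d) : (1 : ℚ) < (d : ℚ) := by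
  have : (2 : ℚ) ≤ (d : ℚ) := by exact_mod_cast hd
  linarith

lemma pow_sub_one_pos {d : ℕ} (hd : 2 ≤ d) {j : ℕ} (hj : j ≠ 0) :
    0 < (d : ℚ) ^ j - 1 := by
  have := one_lt_pow₀ (one_lt_q hd) hj
  linarith

lemma facp_pos {d : ℕ} (hd : 2 ≤ d) (k : ℕ) : 0 < facp d k := by
  refine Finset.prod_pos fun i _ => pow_sub_one_pos hd (by omega)

lemma gbinom_eq {d n k : ℕ} (hk : k ≤ n) :
    gbinom d n k = nump d n k / facp d k := by
  rw [gbinom, if_pos hk, Finset.prod_div_distrib]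
  have h2 : ∏ i ∈ range k, ((d : ℚ) ^ (k - i) - 1) = facp d k := by
    rw [facp, ← Finset.prod_range_reflect]
    refine Finset.prod_congr rfl fun i hi => ?_
    have hi' : i < k := Finset.mem_range.mp hi
    have h : k - (k - 1 - i) = i + 1 := by omega
    rw [h]
  rw [h2]
  rfl

lemma gbinom_zero (d n : ℕ) : gbinom d n 0 = 1 := by
  simp [gbinom]

lemma gbinom_self {d : ℕ} (hd : 2 ≤ d) (n : ℕ) : gbinom d n n = 1 := by
  rw [gbinom, if_pos le_rfl]
  refine Finset.prod_eq_one fun i hi => div_self ?_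
  have hi' : i < n := Finset.mem_range.mp hi
  exact ne_of_gt (pow_sub_one_pos hd (by omega))

lemma gbinom_of_gt {d n k : ℕ} (h : n < k) : gbinom d n k = 0 := by
  rw [gbinom, if_neg (by omega)]

lemma nump_succ_succ (d n k : ℕ) :
    nump d (n + 1) (k + 1) = ((d : ℚ) ^ (n + 1) - 1) * nump d n k := by
  rw [nump, Finset.prod_range_succ', mul_comm]
  congr 1
  · refine Finset.prod_congr rfl fun i _ => ?_
    rw [Nat.succ_sub_succ]

lemma nump_succ (d n k : ℕ) :
    nump d n (k + 1) = nump d n k * ((d : ℚ) ^ (n - k) - 1) := by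
  rw [nump, Finset.prod_range_succ]; rfl

lemma facp_succ (d k : ℕ) :
    facp d (k + 1) = facp d k * ((d : ℚ) ^ (k + 1) - 1) := by
  rw [facp, Finset.prod_range_succ]; rfl

/-- Pascal recurrence for Gaussian binomials. -/
lemma gbinom_pascal {d : ℕ} (hd : 2 ≤ d) {n k : ℕ} (hk : k ≤ n) :
    gbinom d (n + 1) (k + 1)
      = gbinom d n (k + 1) + (d : ℚ) ^ (n - k) * gbinom d n k := by
  rcases eq_or_lt_of_le hk with rfl | hlt
  · rw [gbinom_of_gt (Nat.lt_succ_self _), gbinom_self hd, gbinom_self hd]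
    simp
  · have hk1 : k + 1 ≤ n := hlt
    rw [gbinom_eq (by omega : k + 1 ≤ n + 1), gbinom_eq hk1, gbinom_eq hk,
      nump_succ_succ, nump_succ, facp_succ]
    have hF : facp d k ≠ 0 := ne_of_gt (facp_pos hd k)
    have hK : ((d : ℚ) ^ (k + 1) - 1) ≠ 0 := ne_of_gt (pow_sub_one_pos hd (by omega))
    have hp : (d : ℚ) ^ (n + 1) = (d : ℚ) ^ (n - k) * (d : ℚ) ^ (k + 1) := by
      rw [← pow_add]; congr 1; omega
    rw [hp]
    field_simp
    ring

lemma choose_two_succ (m : ℕ) : (m + 1).choose 2 = m.choose 2 + m := by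
  rw [Nat.choose_succ_succ, Nat.choose_one_right, Nat.add_comm]

/-- q-binomial theorem. -/
lemma qbinom_sum {d : ℕ} (hd : 2 ≤ d) :
    ∀ n, ∀ x : ℚ, ∑ k ∈ range (n + 1),
      gbinom d n k * (d : ℚ) ^ ((n - k).choose 2) * x ^ (n - k)
      = ∏ j ∈ range n, (1 + (d : ℚ) ^ j * x) := by
  intro n
  induction n with
  | zero => intro x; simp [gbinom_zero]
  | succ n ih =>
    intro x
    -- shifted sum identity
    have hshift : ∑ k ∈ range (n + 1),
        gbinom d n k * (d : ℚ) ^ ((n + 1 - k).choose 2) * x ^ (n + 1 - k)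
        = x * ∏ j ∈ range n, (1 + (d : ℚ) ^ j * ((d : ℚ) * x)) := by
      have hterm : ∀ k ∈ range (n + 1),
          gbinom d n k * (d : ℚ) ^ ((n + 1 - k).choose 2) * x ^ (n + 1 - k)
          = x * (gbinom d n k * (d : ℚ) ^ ((n - k).choose 2)
              * ((d : ℚ) * x) ^ (n - k)) := by
        intro k hk
        have hk' : k ≤ n := by have := Finset.mem_range.mp hk; omega
        have e : n + 1 - k = (n - k) + 1 := by omega
        rw [e, choose_two_succ, pow_add, pow_succ, mul_pow]
        ring
      rw [Finset.sum_congr rfl hterm, ← Finset.mul_sum, ih ((d : ℚ) * x)]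
    rw [Finset.sum_range_succ'] at hshift
    have ee : ∀ k ∈ range n,
        gbinom d n (k + 1) * (d : ℚ) ^ ((n + 1 - (k + 1)).choose 2)
          * x ^ (n + 1 - (k + 1))
        = gbinom d n (k + 1) * (d : ℚ) ^ ((n - k).choose 2) * x ^ (n - k) := by
      intro k hk
      have e : n + 1 - (k + 1) = n - k := by omega
      rw [e]
    rw [Finset.sum_congr rfl ee, gbinom_zero] at hshift
    -- main goal
    rw [Finset.sum_range_succ']
    have hstep : ∀ k ∈ range (n + 1),
        gbinom d (n + 1) (k + 1) * (d : ℚ) ^ ((n + 1 - (k + 1)).choose 2)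
          * x ^ (n + 1 - (k + 1))
        = gbinom d n (k + 1) * (d : ℚ) ^ ((n - k).choose 2) * x ^ (n - k)
          + gbinom d n k * (d : ℚ) ^ ((n - k).choose 2) * ((d : ℚ) * x) ^ (n - k) := by
      intro k hk
      have hk' : k ≤ n := by have := Finset.mem_range.mp hk; omega
      have e : n + 1 - (k + 1) = n - k := by omega
      rw [e, gbinom_pascal hd hk', mul_pow]
      ring
    rw [Finset.sum_congr rfl hstep, Finset.sum_add_distrib, ih ((d : ℚ) * x),
      gbinom_zero, Finset.sum_range_succ, gbinom_of_gt (Nat.lt_succ_self n),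
      Finset.prod_range_succ']
    have hprod : ∏ j ∈ range n, (1 + (d : ℚ) ^ (j + 1) * x)
        = ∏ j ∈ range n, (1 + (d : ℚ) ^ j * ((d : ℚ) * x)) := by
      refine Finset.prod_congr rfl fun j _ => ?_
      rw [pow_succ]; ring
    rw [hprod]
    linear_combination hshift

lemma two_mul_choose_two (m : ℕ) : 2 * m.choose 2 = m * (m - 1) := by
  induction m with
  | zero => rfl
  | succ s ih =>
    rw [choose_two_succ, Nat.mul_add, ih, Nat.succ_sub_one]
    cases s with
    | zero => rfl
    | succ t =>
      simp only [Nat.succ_sub_one]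
      ring

lemma choose_two_int (m : ℕ) : (m : ℤ) * ((m : ℤ) - 1) = 2 * (m.choose 2 : ℤ) := by
  cases m with
  | zero => simp
  | succ s =>
    have h := two_mul_choose_two (s + 1)
    rw [Nat.succ_sub_one] at h
    push_cast
    push_cast at h
    linarith

end StabTwo


/-- **Stabilizer states are 2-designs.** For prime `d` and all `n ≥ 1`, the frame
potential of stabilizer states meets the order-2 Welch bound: `F_2(d,n) = W_2(d^n)`. -/
theorem stab_two_design (d n : ℕ) (hd : d.Prime) (hn : 1 ≤ n) :
    framePot d 2 n = welch 2 (d ^ n) := by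
  obtain ⟨m, rfl⟩ : ∃ m, n = m + 1 := ⟨n - 1, by omega⟩
  have hd2 : 2 ≤ d := hd.two_le
  set n := m + 1 with hn'
  have hterm : ∀ k ∈ range (n + 1),
      gbinom d n k * (d : ℚ) ^ ((((n : ℤ) - k) * ((n : ℤ) - k + 3 - 2 * (2:ℕ))) / 2)
      = gbinom d n k * (d : ℚ) ^ ((n - k).choose 2) * (1 : ℚ) ^ (n - k) := by
    intro k hk
    have hk' : k ≤ n := by have := Finset.mem_range.mp hk; omega
    have hm : (n : ℤ) - k = ((n - k : ℕ) : ℤ) := by push_cast; omega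
    have hexp : (((n : ℤ) - k) * ((n : ℤ) - k + 3 - 2 * (2:ℕ))) / 2
        = ((n - k).choose 2 : ℤ) := by
      rw [hm]
      have h2 : ((n - k : ℕ) : ℤ) * (((n - k : ℕ) : ℤ) + 3 - 2 * (2:ℕ))
          = 2 * ((n - k).choose 2 : ℤ) := by
        have := StabTwo.choose_two_int (n - k)
        push_cast
        push_cast at this
        linarith
      rw [h2, Int.mul_ediv_cancel_left _ two_ne_zero]
    rw [hexp, zpow_natCast, one_pow, mul_one]
  rw [framePot, Finset.sum_congr rfl hterm, StabTwo.qbinom_sum hd2 n 1]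
  -- cast Scard
  have hq0 : (0:ℚ) < (d : ℚ) := by
    have : (2:ℚ) ≤ (d:ℚ) := by exact_mod_cast hd2
    linarith
  have hS : (Scard d n : ℚ)
      = (d : ℚ) ^ n * ∏ i ∈ range n, ((d : ℚ) ^ (1 + i) + 1) := by
    rw [Scard, ← Finset.Ico_add_one_right_eq_Icc, Finset.prod_Ico_eq_prod_range]
    push_cast
    simp
  -- welch value
  have hW : welch 2 (d ^ n) = (((d : ℚ) ^ n + 1) * (d : ℚ) ^ n / 2)⁻¹ := by
    rw [welch]
    congr 1
    have he : d ^ n + 2 - 1 = d ^ n + 1 := by omega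
    rw [he]
    have h := StabTwo.two_mul_choose_two (d ^ n + 1)
    rw [Nat.succ_sub_one] at h
    have h' : (2:ℚ) * ((d ^ n + 1).choose 2 : ℚ) = ((d:ℚ) ^ n + 1) * (d:ℚ) ^ n := by
      exact_mod_cast congrArg (Nat.cast : ℕ → ℚ) h
    linarith
  rw [hS, hW, hn']
  have hB : ∏ j ∈ range m, (1 + (d : ℚ) ^ (j + 1) * 1)
      = ∏ i ∈ range m, ((d : ℚ) ^ (1 + i) + 1) := by
    refine Finset.prod_congr rfl fun j _ => ?_
    rw [Nat.add_comm j 1]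
    ring
  have hP : ∏ j ∈ range (m + 1), (1 + (d : ℚ) ^ j * 1)
      = 2 * ∏ i ∈ range m, ((d : ℚ) ^ (1 + i) + 1) := by
    rw [Finset.prod_range_succ', hB]
    norm_num
    ring
  have hSP : ∏ i ∈ range (m + 1), ((d : ℚ) ^ (1 + i) + 1)
      = (∏ i ∈ range m, ((d : ℚ) ^ (1 + i) + 1)) * ((d : ℚ) ^ (m + 1) + 1) := by
    rw [Finset.prod_range_succ, Nat.add_comm 1 m]
  rw [hP, hSP]
  have hBpos : 0 < ∏ i ∈ range m, ((d : ℚ) ^ (1 + i) + 1) := by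
    refine Finset.prod_pos fun i _ => by positivity
  have hpn : (0:ℚ) < (d : ℚ) ^ (m + 1) := by positivity
  have hpn1 : (0:ℚ) < (d : ℚ) ^ (m + 1) + 1 := by positivity
  field_simp
end

section
/- For all n ≥ 1, F_3(2,n) = W_3(2^n), while for every prime d ≥ 3 and all n ≥ 1, F_3(d,n) > W_3(d^n). Here F_t(d,n) = S(d,n)^{-1} Σ_{k=0}^n binom(n,k)_d d^{(n-k)(n-k+3-2t)/2} with S(d,n) = d^n Π_{j=1}^n (d^j+1), and W_3(D) = 6/((D+2)(D+1)D). Hence qubit stabilizer states form a complex projective 3-design, and qudit stabilizer states for odd prime d do not. -/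
/-- The order-3 Welch bound `W_3(D) = binom(D+2,3)⁻¹ = 6/((D+2)(D+1)D)`. -/
noncomputable def welch3 (D : ℕ) : ℚ :=
  6 / (((D : ℚ) + 2) * ((D : ℚ) + 1) * (D : ℚ))


namespace StabAux
open Finset

noncomputable def qn (d n k : ℕ) : ℚ := ∏ i ∈ Finset.range k, ((d:ℚ) ^ (n - i) - 1)
noncomputable def qf (d k : ℕ) : ℚ := ∏ i ∈ Finset.range k, ((d:ℚ) ^ (i+1) - 1)

lemma pow_sub_one_ne {d : ℕ} (hd : 2 ≤ d) {j : ℕ} (hj : 1 ≤ j) : (d:ℚ)^j - 1 ≠ 0 := by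
  have h2 : (2:ℚ) ≤ (d:ℚ) := by exact_mod_cast hd
  have h1 : (1:ℚ) < (d:ℚ)^j := one_lt_pow₀ (by linarith) (by omega)
  intro h; nlinarith

lemma qf_ne_zero {d : ℕ} (hd : 2 ≤ d) (k : ℕ) : qf d k ≠ 0 := by
  rw [qf, Finset.prod_ne_zero_iff]
  intro i _
  exact pow_sub_one_ne hd (by omega)

lemma gbinom_eq {d n k : ℕ} (h : k ≤ n) : gbinom d n k = qn d n k / qf d k := by
  rw [gbinom, if_pos h, Finset.prod_div_distrib]
  congr 1
  rw [qf, ← Finset.prod_range_reflect]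
  apply Finset.prod_congr rfl
  intro i hi
  rw [mem_range] at hi
  have h1 : k - (k - 1 - i) = i + 1 := by omega
  rw [h1]

lemma gbinom_zero (d n : ℕ) : gbinom d n 0 = 1 := by simp [gbinom]

lemma gbinom_of_lt {d n k : ℕ} (h : n < k) : gbinom d n k = 0 := by
  rw [gbinom, if_neg (by omega)]

lemma gbinom_self {d : ℕ} (hd : 2 ≤ d) (n : ℕ) : gbinom d n n = 1 := by
  rw [gbinom, if_pos le_rfl]
  apply Finset.prod_eq_one
  intro i hi
  rw [mem_range] at hi
  exact div_self (pow_sub_one_ne hd (by omega))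

lemma pascal {d n k : ℕ} (hd : 2 ≤ d) (hk : k ≤ n) :
    gbinom d (n+1) (k+1) = gbinom d n k + (d:ℚ)^(k+1) * gbinom d n (k+1) := by
  rcases eq_or_lt_of_le hk with rfl | hk'
  · rw [gbinom_self hd, gbinom_self hd, gbinom_of_lt (Nat.lt_succ_self _), mul_zero, add_zero]
  · have h1 : k + 1 ≤ n := hk'
    rw [gbinom_eq (by omega), gbinom_eq hk, gbinom_eq h1]
    have hqn1 : qn d (n+1) (k+1) = ((d:ℚ)^(n+1) - 1) * qn d n k := by
      rw [qn, Finset.prod_range_succ', qn]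
      simp only [Nat.succ_sub_succ, Nat.sub_zero]
      ring
    have hqn2 : qn d n (k+1) = qn d n k * ((d:ℚ)^(n-k) - 1) := by
      rw [qn, Finset.prod_range_succ, qn]
    have hqf : qf d (k+1) = qf d k * ((d:ℚ)^(k+1) - 1) := by
      rw [qf, Finset.prod_range_succ, qf]
    rw [hqn1, hqn2, hqf]
    have hf : qf d k ≠ 0 := qf_ne_zero hd k
    have h2 : ((d:ℚ)^(k+1) - 1) ≠ 0 := pow_sub_one_ne hd (by omega)
    have hpow : (d:ℚ)^(k+1) * (d:ℚ)^(n-k) = (d:ℚ)^(n+1) := by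
      rw [← pow_add]; congr 1; omega
    field_simp
    linear_combination (-qn d n k) * hpow

end StabAux

namespace StabAux
open Finset

noncomputable def uu (d : ℕ) (m : ℤ) : ℚ := (d:ℚ) ^ ((m * (m - 3)) / 2)

lemma uu_succ {d : ℕ} (hd : 2 ≤ d) (m : ℤ) : uu d (m + 1) = uu d m * (d:ℚ) ^ (m - 1) := by
  have hq : (d:ℚ) ≠ 0 := Nat.cast_ne_zero.mpr (by omega)
  obtain ⟨c, hc⟩ : ∃ c : ℤ, m * (m - 3) = 2 * c := by
    rcases Int.even_or_odd m with ⟨a, ha⟩ | ⟨a, ha⟩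
    · exact ⟨a * (m - 3), by rw [ha]; ring⟩
    · exact ⟨(2*a+1) * (a - 1), by rw [ha]; ring⟩
  have h1 : (m * (m - 3)) / 2 = c := by rw [hc]; exact Int.mul_ediv_cancel_left _ two_ne_zero
  have h2 : ((m+1) * ((m+1) - 3)) / 2 = c + (m - 1) := by
    have he : (m+1) * ((m+1) - 3) = 2 * (c + (m - 1)) := by linear_combination hc
    rw [he]; exact Int.mul_ediv_cancel_left _ two_ne_zero
  rw [uu, uu, h1, h2, zpow_add₀ hq]

lemma key {d : ℕ} (hd : 2 ≤ d) (n : ℕ) :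
    ∑ k ∈ range (n+1), gbinom d n k * uu d ((n:ℤ) - k) =
      ∏ i ∈ range n, (1 + (d:ℚ) ^ ((i:ℤ) - 1)) := by
  have hq : (d:ℚ) ≠ 0 := Nat.cast_ne_zero.mpr (by omega)
  induction n with
  | zero => simp [gbinom_zero, uu]
  | succ n ih =>
    rw [Finset.sum_range_succ']
    have hterm : ∀ k ∈ range (n+1),
        gbinom d (n+1) (k+1) * uu d (((n+1:ℕ):ℤ) - ((k+1:ℕ):ℤ)) =
          gbinom d n k * uu d ((n:ℤ) - k) +
            (d:ℚ) ^ ((n:ℤ) - 1) * (gbinom d n (k+1) * uu d ((n:ℤ) - ((k+1:ℕ):ℤ))) := by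
      intro k hk
      rw [mem_range] at hk
      have hcast : ((n+1:ℕ):ℤ) - ((k+1:ℕ):ℤ) = (n:ℤ) - k := by push_cast; ring
      rw [hcast, pascal hd (by omega), add_mul]
      congr 1
      have hu : uu d ((n:ℤ) - k) =
          uu d ((n:ℤ) - ((k+1:ℕ):ℤ)) * (d:ℚ) ^ (((n:ℤ) - ((k+1:ℕ):ℤ)) - 1) := by
        have h := uu_succ hd ((n:ℤ) - ((k+1:ℕ):ℤ))
        have h2 : (n:ℤ) - ((k+1:ℕ):ℤ) + 1 = (n:ℤ) - k := by push_cast; ring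
        rw [h2] at h
        exact h
      rw [hu]
      have hqq : (d:ℚ)^(k+1) * (d:ℚ) ^ ((n:ℤ) - ((k+1:ℕ):ℤ) - 1) = (d:ℚ) ^ ((n:ℤ) - 1) := by
        rw [← zpow_natCast (d:ℚ) (k+1), ← zpow_add₀ hq]
        congr 1
        push_cast
        ring
      linear_combination (gbinom d n (k+1) * uu d ((n:ℤ) - ((k+1:ℕ):ℤ))) * hqq
    rw [Finset.sum_congr rfl hterm, Finset.sum_add_distrib, ih, ← Finset.mul_sum]
    have hshift : ∑ k ∈ range (n+1), gbinom d n (k+1) * uu d ((n:ℤ) - ((k+1:ℕ):ℤ)) =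
        (∏ i ∈ range n, (1 + (d:ℚ) ^ ((i:ℤ) - 1))) - uu d n := by
      have h1 := Finset.sum_range_succ' (fun k => gbinom d n k * uu d ((n:ℤ) - k)) (n+1)
      have h2 := Finset.sum_range_succ (fun k => gbinom d n k * uu d ((n:ℤ) - k)) (n+1)
      simp only [gbinom_of_lt (Nat.lt_succ_self n), zero_mul, add_zero] at h2
      simp only [gbinom_zero, one_mul, Nat.cast_zero, sub_zero] at h1
      rw [h2, ih] at h1
      linarith [h1]
    rw [hshift, gbinom_zero, one_mul, Finset.prod_range_succ]
    have hun : uu d (((n+1:ℕ)):ℤ) = uu d n * (d:ℚ) ^ ((n:ℤ) - 1) := by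
      have := uu_succ hd (n:ℤ)
      rw [show (((n+1:ℕ)):ℤ) = (n:ℤ) + 1 by push_cast; ring]
      exact this
    rw [show (((n+1:ℕ)):ℤ) - ((0:ℕ):ℤ) = (((n+1:ℕ)):ℤ) by push_cast; ring, hun]
    ring

end StabAux

namespace StabAux
open Finset

lemma framePot_eq {d : ℕ} (hd : 2 ≤ d) (n : ℕ) :
    framePot d 3 n = (Scard d n : ℚ)⁻¹ * ∏ i ∈ range n, (1 + (d:ℚ) ^ ((i:ℤ) - 1)) := by
  rw [framePot, ← key hd n]
  congr 1
  apply Finset.sum_congr rfl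
  intro k _
  congr 1
  rw [uu]
  congr 1
  push_cast
  ring

lemma framePot_closed {d : ℕ} (hd : 2 ≤ d) (m : ℕ) :
    framePot d 3 (m+1) =
      2 * ((d:ℚ) + 1) / ((d:ℚ)^(m+2) * ((d:ℚ)^m + 1) * ((d:ℚ)^(m+1) + 1)) := by
  have hqpos : (0:ℚ) < d := by
    have : (2:ℚ) ≤ d := by exact_mod_cast hd
    linarith
  have hq0 : (d:ℚ) ≠ 0 := ne_of_gt hqpos
  rw [framePot_eq hd]
  have hP : ∏ i ∈ range (m+1), (1 + (d:ℚ) ^ ((i:ℤ) - 1)) =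
      (∏ i ∈ range m, (1 + (d:ℚ)^i)) * (1 + ((d:ℚ))⁻¹) := by
    rw [Finset.prod_range_succ']
    congr 1
    · apply Finset.prod_congr rfl
      intro i _
      congr 1
      rw [show ((i+1:ℕ):ℤ) - 1 = (i:ℤ) by push_cast; ring, zpow_natCast]
    · congr 1
      rw [show ((0:ℕ):ℤ) - 1 = (-1:ℤ) by norm_num, zpow_neg_one]
  have hS : (Scard d (m+1) : ℚ) =
      (d:ℚ)^(m+1) * ((∏ i ∈ range m, ((d:ℚ)^(i+1) + 1)) * ((d:ℚ)^(m+1) + 1)) := by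
    rw [Scard]
    push_cast
    congr 1
    have hIcc : ∀ k : ℕ, ∏ x ∈ Icc 1 k, ((d:ℚ)^x + 1) = ∏ i ∈ range k, ((d:ℚ)^(i+1) + 1) := by
      intro k
      induction k with
      | zero => simp
      | succ k ihk => rw [Finset.prod_Icc_succ_top (by omega), ihk, Finset.prod_range_succ]
    rw [hIcc (m+1), Finset.prod_range_succ]
  have hBC : (∏ i ∈ range m, (1 + (d:ℚ)^i)) * (1 + (d:ℚ)^m) =
      2 * ∏ i ∈ range m, ((d:ℚ)^(i+1) + 1) := by
    have h1 := Finset.prod_range_succ (fun i => 1 + (d:ℚ)^i) m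
    have h2 := Finset.prod_range_succ' (fun i => 1 + (d:ℚ)^i) m
    rw [h1] at h2
    rw [h2, pow_zero]
    have : ∏ i ∈ range m, (1 + (d:ℚ)^(i+1)) = ∏ i ∈ range m, ((d:ℚ)^(i+1) + 1) := by
      apply Finset.prod_congr rfl
      intro i _
      ring
    rw [this]
    ring
  have hCpos : (0:ℚ) < ∏ i ∈ range m, ((d:ℚ)^(i+1) + 1) := by
    apply Finset.prod_pos
    intro i _
    positivity
  have hmpos : (0:ℚ) < 1 + (d:ℚ)^m := by positivity
  have hBeq : ∏ i ∈ range m, (1 + (d:ℚ)^i) =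
      2 * (∏ i ∈ range m, ((d:ℚ)^(i+1) + 1)) / (1 + (d:ℚ)^m) := by
    rw [eq_div_iff (ne_of_gt hmpos)]
    exact hBC
  rw [hP, hS, hBeq]
  have h1 : ((d:ℚ)^(m+1) + 1) ≠ 0 := by positivity
  have h2 : ((d:ℚ)^m + 1) ≠ 0 := by positivity
  have h3 : (d:ℚ)^(m+2) ≠ 0 := by positivity
  have h4 : (d:ℚ)^(m+1) ≠ 0 := by positivity
  field_simp
  ring

end StabAux

/-- **Qubit stabilizer states are complex projective 3-designs; odd-prime qudit
stabilizer states are not.** For all `n ≥ 1`, `F_3(2,n) = W_3(2^n)`, while for every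
prime `d ≥ 3` and all `n ≥ 1`, `F_3(d,n) > W_3(d^n)`. -/
theorem stab_three_design_iff_qubit :
    (∀ n : ℕ, 1 ≤ n → framePot 2 3 n = welch3 (2 ^ n)) ∧
    (∀ d : ℕ, d.Prime → 3 ≤ d → ∀ n : ℕ, 1 ≤ n → welch3 (d ^ n) < framePot d 3 n) := by
  constructor
  · intro n hn
    obtain ⟨m, rfl⟩ : ∃ m, n = m + 1 := ⟨n - 1, by omega⟩
    rw [StabAux.framePot_closed le_rfl, welch3]
    push_cast
    have h1 : ((2:ℚ)^(m+1) + 2) ≠ 0 := by positivity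
    have h2 : ((2:ℚ)^(m+1) + 1) ≠ 0 := by positivity
    have h3 : ((2:ℚ)^(m+1)) ≠ 0 := by positivity
    have h4 : ((2:ℚ)^(m+2) * ((2:ℚ)^m + 1) * ((2:ℚ)^(m+1) + 1)) ≠ 0 := by positivity
    field_simp
    ring
  · intro d hp hd3 n hn
    obtain ⟨m, rfl⟩ : ∃ m, n = m + 1 := ⟨n - 1, by omega⟩
    rw [StabAux.framePot_closed (by omega), welch3]
    have hq3 : (3:ℚ) ≤ (d:ℚ) := by exact_mod_cast hd3
    have hd0 : (0:ℚ) < (d:ℚ) := by linarith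
    have hA1 : (1:ℚ) ≤ (d:ℚ)^m := one_le_pow₀ (by linarith)
    push_cast
    have e1 : (d:ℚ)^(m+1) = (d:ℚ)^m * d := pow_succ _ _
    have e2 : (d:ℚ)^(m+2) = (d:ℚ)^m * d * d := by rw [pow_succ, e1]
    rw [e1, e2]
    set A := (d:ℚ)^m with hA
    have hApos : (0:ℚ) < A := by positivity
    have hpos1 : (0:ℚ) < (A * d + 2) * (A * d + 1) * (A * d) := by positivity
    have hpos2 : (0:ℚ) < A * d * d * (A + 1) * (A * d + 1) := by positivity
    rw [div_lt_div_iff₀ hpos1 hpos2]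
    have hdA1 : (0:ℚ) < (d:ℚ) * A - 1 := by nlinarith
    have hd2 : (0:ℚ) < (d:ℚ) - 2 := by linarith
    have hpos : (0:ℚ) < 2 * d * A * (d * A + 1) * ((d - 2) * (d * A - 1)) := by positivity
    nlinarith [hpos]
end

section
/- For every prime d ≥ 2 and every n ≥ 1, F_4(d,n) > W_4(d^n), where F_t(d,n) = S(d,n)^{-1} Σ_{k=0}^n binom(n,k)_d d^{(n-k)(n-k+3-2t)/2}, S(d,n) = d^n Π_{j=1}^n (d^j+1), and W_4(D) = 24/((D+3)(D+2)(D+1)D). Hence stabilizer states never form a complex projective 4-design. -/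
/-- The order-4 Welch bound `W_4(D) = binom(D+3,4)⁻¹ = 24/((D+3)(D+2)(D+1)D)`. -/
noncomputable def welch4 (D : ℕ) : ℚ :=
  24 / (((D : ℚ) + 3) * ((D : ℚ) + 2) * ((D : ℚ) + 1) * (D : ℚ))

lemma gbinom_nonneg {d : ℕ} (hd : 2 ≤ d) (n k : ℕ) : 0 ≤ gbinom d n k := by
  have hd1 : (1:ℚ) ≤ (d:ℚ) := by exact_mod_cast Nat.one_le_of_lt hd
  unfold gbinom
  split
  · apply Finset.prod_nonneg
    intro i _
    apply div_nonneg <;> simp only [sub_nonneg] <;> exact one_le_pow₀ hd1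
  · exact le_refl 0

lemma gbinom_ge {d n k : ℕ} (hd : 2 ≤ d) (hk : k ≤ n) :
    (d:ℚ) ^ (k * (n - k)) ≤ gbinom d n k := by
  have hd1 : (1:ℚ) ≤ (d:ℚ) := by exact_mod_cast Nat.one_le_of_lt hd
  have hd2 : (2:ℚ) ≤ (d:ℚ) := by exact_mod_cast hd
  unfold gbinom
  rw [if_pos hk]
  have h0 : (d:ℚ) ^ (k * (n - k)) = ∏ _i ∈ Finset.range k, (d:ℚ)^(n-k) := by
    rw [Finset.prod_const, Finset.card_range, ← pow_mul, mul_comm]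
  rw [h0]
  apply Finset.prod_le_prod
  · intro i _; positivity
  · intro i hi
    have hik : i < k := Finset.mem_range.mp hi
    have hden : (0:ℚ) < (d:ℚ)^(k-i) - 1 := by
      have h1 : (2:ℚ) ≤ (d:ℚ)^(k-i) := le_trans hd2 (le_self_pow₀ hd1 (by omega))
      linarith
    rw [le_div_iff₀ hden]
    have h2 : (d:ℚ)^(n-k) * ((d:ℚ)^(k-i) - 1) = (d:ℚ)^(n-i) - (d:ℚ)^(n-k) := by
      rw [mul_sub, mul_one, ← pow_add]
      congr 2
      omega
    rw [h2]
    have h3 : (1:ℚ) ≤ (d:ℚ)^(n-k) := one_le_pow₀ hd1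
    linarith

lemma prod_bound3 {d : ℕ} (hd : 3 ≤ d) :
    ∀ n : ℕ, 1 ≤ n →
    (∏ j ∈ Finset.Icc 1 n, ((d:ℚ)^j + 1)) * 3^n
      ≤ (2 * 3^n - 2) * (d:ℚ)^(∑ j ∈ Finset.Icc 1 n, j) := by
  have hd3 : (3:ℚ) ≤ (d:ℚ) := by exact_mod_cast hd
  intro n hn
  induction n with
  | zero => omega
  | succ m ih =>
    rcases Nat.eq_or_lt_of_le hn with h1 | h1
    · -- m + 1 = 1
      have hm : m = 0 := by omega
      subst hm
      simp
      nlinarith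
    · have hm : 1 ≤ m := by omega
      have IH := ih hm
      rw [Finset.prod_Icc_succ_top (by omega : 1 ≤ m + 1),
          Finset.sum_Icc_succ_top (by omega : 1 ≤ m + 1)]
      have ha : (3:ℚ) ≤ 3^m := by
        calc (3:ℚ) = 3^1 := by norm_num
        _ ≤ 3^m := by apply pow_le_pow_right₀ (by norm_num) hm
      have hb : (3:ℚ)^(m+1) ≤ (d:ℚ)^(m+1) := by
        apply pow_le_pow_left₀ (by norm_num) hd3
      have hX : (1:ℚ) ≤ (d:ℚ)^(∑ j ∈ Finset.Icc 1 m, j) := one_le_pow₀ (by linarith)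
      have hQ : (0:ℚ) ≤ ∏ j ∈ Finset.Icc 1 m, ((d:ℚ)^j + 1) := by
        apply Finset.prod_nonneg; intro i _; positivity
      have hfac : (0:ℚ) < (d:ℚ)^(m+1) + 1 := by positivity
      -- multiply IH by 3 * (d^(m+1)+1)
      have step1 : (∏ j ∈ Finset.Icc 1 m, ((d:ℚ)^j + 1)) * ((d:ℚ)^(m+1)+1) * 3^(m+1)
          ≤ (2 * 3^m - 2) * (d:ℚ)^(∑ j ∈ Finset.Icc 1 m, j) * (3 * ((d:ℚ)^(m+1)+1)) := by
        have := mul_le_mul_of_nonneg_right IH (le_of_lt (by positivity : (0:ℚ) < 3 * ((d:ℚ)^(m+1)+1)))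
        calc (∏ j ∈ Finset.Icc 1 m, ((d:ℚ)^j + 1)) * ((d:ℚ)^(m+1)+1) * 3^(m+1)
            = (∏ j ∈ Finset.Icc 1 m, ((d:ℚ)^j + 1)) * 3^m * (3 * ((d:ℚ)^(m+1)+1)) := by ring
          _ ≤ _ := this
      have step2 : (2 * 3^m - 2) * (d:ℚ)^(∑ j ∈ Finset.Icc 1 m, j) * (3 * ((d:ℚ)^(m+1)+1))
          ≤ (2 * 3^(m+1) - 2) * ((d:ℚ)^(∑ j ∈ Finset.Icc 1 m, j) * (d:ℚ)^(m+1)) := by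
        have key : (2 * 3^m - 2) * (3 * ((d:ℚ)^(m+1)+1)) ≤ (2 * 3^(m+1) - 2) * (d:ℚ)^(m+1) := by
          have h3m : (3:ℚ)^(m+1) = 3 * 3^m := by ring
          nlinarith [hb, ha]
        calc (2 * 3^m - 2) * (d:ℚ)^(∑ j ∈ Finset.Icc 1 m, j) * (3 * ((d:ℚ)^(m+1)+1))
            = ((2 * 3^m - 2) * (3 * ((d:ℚ)^(m+1)+1))) * (d:ℚ)^(∑ j ∈ Finset.Icc 1 m, j) := by ring
          _ ≤ ((2 * 3^(m+1) - 2) * (d:ℚ)^(m+1)) * (d:ℚ)^(∑ j ∈ Finset.Icc 1 m, j) := by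
              apply mul_le_mul_of_nonneg_right key (by positivity)
          _ = _ := by ring
      calc (∏ j ∈ Finset.Icc 1 m, ((d:ℚ)^j + 1)) * ((d:ℚ)^(m+1)+1) * 3^(m+1)
          ≤ (2 * 3^(m+1) - 2) * ((d:ℚ)^(∑ j ∈ Finset.Icc 1 m, j) * (d:ℚ)^(m+1)) := le_trans step1 step2
        _ = (2 * 3^(m+1) - 2) * (d:ℚ)^((∑ j ∈ Finset.Icc 1 m, j) + (m+1)) := by rw [← pow_add]

lemma prod_bound2 :
    ∀ n : ℕ, 2 ≤ n →
    (∏ j ∈ Finset.Icc 1 n, ((2:ℚ)^j + 1)) * 2^(n+1)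
      ≤ (5 * 2^n - 5) * (2:ℚ)^(∑ j ∈ Finset.Icc 1 n, j) := by
  intro n hn
  induction n with
  | zero => omega
  | succ m ih =>
    rcases Nat.eq_or_lt_of_le hn with h1 | h1
    · have hm : m = 1 := by omega
      subst hm
      rw [show Finset.Icc 1 (1+1) = {1, 2} by decide]
      norm_num [Finset.prod_insert, Finset.sum_insert, Finset.mem_singleton]
    · have hm : 2 ≤ m := by omega
      have IH := ih hm
      rw [Finset.prod_Icc_succ_top (by omega : 1 ≤ m + 1),
          Finset.sum_Icc_succ_top (by omega : 1 ≤ m + 1)]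
      have ha : (4:ℚ) ≤ 2^m := by
        calc (4:ℚ) = 2^2 := by norm_num
        _ ≤ 2^m := by apply pow_le_pow_right₀ (by norm_num) hm
      have hX : (1:ℚ) ≤ (2:ℚ)^(∑ j ∈ Finset.Icc 1 m, j) := one_le_pow₀ (by norm_num)
      have step1 : (∏ j ∈ Finset.Icc 1 m, ((2:ℚ)^j + 1)) * ((2:ℚ)^(m+1)+1) * 2^(m+1+1)
          ≤ (5 * 2^m - 5) * (2:ℚ)^(∑ j ∈ Finset.Icc 1 m, j) * (2 * ((2:ℚ)^(m+1)+1)) := by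
        have := mul_le_mul_of_nonneg_right IH (le_of_lt (by positivity : (0:ℚ) < 2 * ((2:ℚ)^(m+1)+1)))
        calc (∏ j ∈ Finset.Icc 1 m, ((2:ℚ)^j + 1)) * ((2:ℚ)^(m+1)+1) * 2^(m+1+1)
            = (∏ j ∈ Finset.Icc 1 m, ((2:ℚ)^j + 1)) * 2^(m+1) * (2 * ((2:ℚ)^(m+1)+1)) := by ring
          _ ≤ _ := this
      have step2 : (5 * 2^m - 5) * (2:ℚ)^(∑ j ∈ Finset.Icc 1 m, j) * (2 * ((2:ℚ)^(m+1)+1))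
          ≤ (5 * 2^(m+1) - 5) * ((2:ℚ)^(∑ j ∈ Finset.Icc 1 m, j) * (2:ℚ)^(m+1)) := by
        have key : (5 * 2^m - 5) * (2 * ((2:ℚ)^(m+1)+1)) ≤ (5 * 2^(m+1) - 5) * (2:ℚ)^(m+1) := by
          have h2m : (2:ℚ)^(m+1) = 2 * 2^m := by ring
          nlinarith [ha]
        calc (5 * 2^m - 5) * (2:ℚ)^(∑ j ∈ Finset.Icc 1 m, j) * (2 * ((2:ℚ)^(m+1)+1))
            = ((5 * 2^m - 5) * (2 * ((2:ℚ)^(m+1)+1))) * (2:ℚ)^(∑ j ∈ Finset.Icc 1 m, j) := by ring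
          _ ≤ ((5 * 2^(m+1) - 5) * (2:ℚ)^(m+1)) * (2:ℚ)^(∑ j ∈ Finset.Icc 1 m, j) := by
              apply mul_le_mul_of_nonneg_right key (by positivity)
          _ = _ := by ring
      calc (∏ j ∈ Finset.Icc 1 m, ((2:ℚ)^j + 1)) * ((2:ℚ)^(m+1)+1) * 2^(m+1+1)
          ≤ (5 * 2^(m+1) - 5) * ((2:ℚ)^(∑ j ∈ Finset.Icc 1 m, j) * (2:ℚ)^(m+1)) := le_trans step1 step2
        _ = (5 * 2^(m+1) - 5) * (2:ℚ)^((∑ j ∈ Finset.Icc 1 m, j) + (m+1)) := by rw [← pow_add]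

lemma gauss_sum (n : ℕ) : (∑ j ∈ Finset.Icc 1 n, j) * 2 = n * (n+1) := by
  induction n with
  | zero => simp
  | succ m ih =>
    rw [Finset.sum_Icc_succ_top (by omega : 1 ≤ m + 1)]
    calc ((∑ j ∈ Finset.Icc 1 m, j) + (m+1)) * 2
        = (∑ j ∈ Finset.Icc 1 m, j) * 2 + (m+1)*2 := by ring
      _ = m*(m+1) + (m+1)*2 := by rw [ih]
      _ = (m+1)*(m+1+1) := by ring

lemma even_aux (a : ℤ) : 2 ∣ a * (a - 5) := by
  rcases Int.even_or_odd a with ⟨c, hc⟩ | ⟨c, hc⟩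
  · exact ⟨c * (a - 5), by rw [hc]; ring⟩
  · exact ⟨a * (c - 2), by rw [hc]; ring⟩

lemma Scard_pos {d : ℕ} (hd : 2 ≤ d) (n : ℕ) : (0:ℚ) < (Scard d n : ℚ) := by
  have : 0 < Scard d n := by
    unfold Scard
    apply Nat.mul_pos (pow_pos (by omega) n)
    apply Finset.prod_pos
    intro i _
    positivity
  exact_mod_cast this

lemma welch_le {d : ℕ} (hd : 2 ≤ d) (n : ℕ) : welch4 (d^n) ≤ 24 / (d:ℚ)^(4*n) := by
  have hD : (1:ℚ) ≤ (d:ℚ)^n := one_le_pow₀ (by exact_mod_cast Nat.one_le_of_lt hd)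
  unfold welch4
  push_cast
  have h4 : (d:ℚ)^(4*n) = ((d:ℚ)^n)^4 := by rw [← pow_mul, mul_comm]
  rw [h4]
  apply div_le_div_of_nonneg_left (by norm_num) (by positivity)
  nlinarith [hD, pow_nonneg (by positivity : (0:ℚ) ≤ (d:ℚ)^n) 2, pow_nonneg (by positivity : (0:ℚ) ≤ (d:ℚ)^n) 3, sq_nonneg ((d:ℚ)^n)]

lemma Scard_le3 {d n : ℕ} (hd : 3 ≤ d) (hn : 1 ≤ n) :
    (Scard d n : ℚ) ≤ 2 * (d:ℚ)^(n + ∑ j ∈ Finset.Icc 1 n, j) := by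
  have h := prod_bound3 hd n hn
  have h3 : (0:ℚ) < 3^n := by positivity
  have hdn : (0:ℚ) ≤ (d:ℚ)^n := by positivity
  have hX : (0:ℚ) ≤ (d:ℚ)^(∑ j ∈ Finset.Icc 1 n, j) := by positivity
  have hQ : (∏ j ∈ Finset.Icc 1 n, ((d:ℚ)^j + 1)) ≤ 2 * (d:ℚ)^(∑ j ∈ Finset.Icc 1 n, j) := by
    rw [← le_div_iff₀ h3] at h
    calc (∏ j ∈ Finset.Icc 1 n, ((d:ℚ)^j + 1)) ≤ (2 * 3^n - 2) * (d:ℚ)^(∑ j ∈ Finset.Icc 1 n, j) / 3^n := h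
      _ ≤ 2 * 3^n * (d:ℚ)^(∑ j ∈ Finset.Icc 1 n, j) / 3^n := by
          gcongr
          nlinarith
      _ = 2 * (d:ℚ)^(∑ j ∈ Finset.Icc 1 n, j) := by field_simp
  have hcast : (Scard d n : ℚ) = (d:ℚ)^n * ∏ j ∈ Finset.Icc 1 n, ((d:ℚ)^j + 1) := by
    unfold Scard
    push_cast
    ring
  rw [hcast, pow_add]
  calc (d:ℚ)^n * ∏ j ∈ Finset.Icc 1 n, ((d:ℚ)^j + 1)
      ≤ (d:ℚ)^n * (2 * (d:ℚ)^(∑ j ∈ Finset.Icc 1 n, j)) := by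
        apply mul_le_mul_of_nonneg_left hQ hdn
    _ = 2 * ((d:ℚ)^n * (d:ℚ)^(∑ j ∈ Finset.Icc 1 n, j)) := by ring

lemma Scard_le2 {n : ℕ} (hn : 2 ≤ n) :
    (Scard 2 n : ℚ) ≤ 5/2 * (2:ℚ)^(n + ∑ j ∈ Finset.Icc 1 n, j) := by
  have h := prod_bound2 n hn
  have h3 : (0:ℚ) < 2^(n+1) := by positivity
  have hX : (0:ℚ) ≤ (2:ℚ)^(∑ j ∈ Finset.Icc 1 n, j) := by positivity
  have hQ : (∏ j ∈ Finset.Icc 1 n, ((2:ℚ)^j + 1)) ≤ 5/2 * (2:ℚ)^(∑ j ∈ Finset.Icc 1 n, j) := by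
    rw [← le_div_iff₀ h3] at h
    calc (∏ j ∈ Finset.Icc 1 n, ((2:ℚ)^j + 1)) ≤ (5 * 2^n - 5) * (2:ℚ)^(∑ j ∈ Finset.Icc 1 n, j) / 2^(n+1) := h
      _ ≤ 5 * 2^n * (2:ℚ)^(∑ j ∈ Finset.Icc 1 n, j) / 2^(n+1) := by
          gcongr
          nlinarith
      _ = 5/2 * (2:ℚ)^(∑ j ∈ Finset.Icc 1 n, j) := by
          rw [pow_succ]
          field_simp
  have hcast : (Scard 2 n : ℚ) = (2:ℚ)^n * ∏ j ∈ Finset.Icc 1 n, ((2:ℚ)^j + 1) := by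
    unfold Scard
    push_cast
    ring
  rw [hcast, pow_add]
  calc (2:ℚ)^n * ∏ j ∈ Finset.Icc 1 n, ((2:ℚ)^j + 1)
      ≤ (2:ℚ)^n * (5/2 * (2:ℚ)^(∑ j ∈ Finset.Icc 1 n, j)) := by
        apply mul_le_mul_of_nonneg_left hQ (by positivity)
    _ = 5/2 * ((2:ℚ)^n * (2:ℚ)^(∑ j ∈ Finset.Icc 1 n, j)) := by ring

/-- exponent identity: `k(n-k) + (n-k)(n-k-5)/2 = n(n-5)/2 + k(5-k)/2` over ℤ. -/
lemma exp_identity (N K : ℤ) :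
    K * (N - K) + ((N - K) * (N - K + 3 - 2*4)) / 2
      = (N*(N-5))/2 + (K*(5-K))/2 := by
  have e : (N-K) * (N - K + 3 - 2*4) = (N-K) * ((N-K) - 5) := by ring
  rw [e]
  obtain ⟨x, hx⟩ := even_aux (N-K)
  obtain ⟨y, hy⟩ := even_aux N
  obtain ⟨z, hz⟩ : (2:ℤ) ∣ K*(5-K) := by
    obtain ⟨c, hc⟩ := even_aux K
    exact ⟨-c, by linear_combination -hc⟩
  rw [hx, hy, hz, Int.mul_ediv_cancel_left _ two_ne_zero, Int.mul_ediv_cancel_left _ two_ne_zero,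
      Int.mul_ediv_cancel_left _ two_ne_zero]
  have h2 : 2 * (K * (N-K) + x) = 2 * (y + z) := by linear_combination (-1 : ℤ) * hx + hy + hz
  linarith

lemma term_ge_c {d n k : ℕ} (hd : 2 ≤ d) (hk : k ≤ n) (c : ℚ)
    (hg : c * (d:ℚ)^(k*(n-k)) ≤ gbinom d n k) :
    c * (d:ℚ)^(((n:ℤ)*((n:ℤ)-5))/2 + ((k:ℤ)*(5-(k:ℤ)))/2)
      ≤ gbinom d n k * (d:ℚ)^((((n:ℤ) - (k:ℤ)) * ((n:ℤ) - (k:ℤ) + 3 - 2*4)) / 2) := by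
  have hd0 : (0:ℚ) < (d:ℚ) := by exact_mod_cast (by omega : 0 < d)
  have hne : (d:ℚ) ≠ 0 := ne_of_gt hd0
  have hE : (0:ℚ) < (d:ℚ) ^ ((((n:ℤ) - (k:ℤ)) * ((n:ℤ) - (k:ℤ) + 3 - 2*4)) / 2) := zpow_pos hd0 _
  have hc : ((k*(n-k) : ℕ) : ℤ) = (k:ℤ) * ((n:ℤ) - (k:ℤ)) := by push_cast [Nat.cast_sub hk]; ring
  have key : (d:ℚ)^(((n:ℤ)*((n:ℤ)-5))/2 + ((k:ℤ)*(5-(k:ℤ)))/2)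
      = (d:ℚ)^(k*(n-k)) * (d:ℚ)^((((n:ℤ) - (k:ℤ)) * ((n:ℤ) - (k:ℤ) + 3 - 2*4)) / 2) := by
    rw [← zpow_natCast (d:ℚ) (k*(n-k)), ← zpow_add₀ hne]
    congr 1
    rw [hc]
    exact (exp_identity (n:ℤ) (k:ℤ)).symm
  calc c * (d:ℚ)^(((n:ℤ)*((n:ℤ)-5))/2 + ((k:ℤ)*(5-(k:ℤ)))/2)
      = (c * (d:ℚ)^(k*(n-k))) * (d:ℚ)^((((n:ℤ) - (k:ℤ)) * ((n:ℤ) - (k:ℤ) + 3 - 2*4)) / 2) := by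
        rw [key]; ring
    _ ≤ _ := mul_le_mul_of_nonneg_right hg hE.le

lemma main3 {d n : ℕ} (hd : 3 ≤ d) (hn : 3 ≤ n) : welch4 (d^n) < framePot d 4 n := by
  have hd2 : 2 ≤ d := by omega
  have hd0 : (0:ℚ) < (d:ℚ) := by exact_mod_cast (by omega : 0 < d)
  have hne : (d:ℚ) ≠ 0 := ne_of_gt hd0
  have hdQ : (3:ℚ) ≤ (d:ℚ) := by exact_mod_cast hd
  have hS0 := Scard_pos hd2 n
  rw [framePot, inv_mul_eq_div, lt_div_iff₀ hS0]
  have hw2 : 2 * (((n:ℤ)*((n:ℤ)-5))/2) = (n:ℤ)*((n:ℤ)-5) := by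
    obtain ⟨y, hy⟩ := even_aux (n:ℤ)
    rw [hy, Int.mul_ediv_cancel_left _ two_ne_zero]
  set w : ℤ := ((n:ℤ)*((n:ℤ)-5))/2 with hwdef
  -- upper bound for welch4 * Scard
  have hG : ((∑ j ∈ Finset.Icc 1 n, j : ℕ) : ℤ) * 2 = (n:ℤ)*((n:ℤ)+1) := by
    exact_mod_cast gauss_sum n
  have hexp : ((n + ∑ j ∈ Finset.Icc 1 n, j : ℕ) : ℤ) = w + 4*(n:ℤ) := by
    rw [Nat.cast_add]
    have h2 : 2*((n:ℤ) + ((∑ j ∈ Finset.Icc 1 n, j : ℕ):ℤ)) = 2*(w + 4*(n:ℤ)) := by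
      linear_combination hG - hw2
    linarith
  have hWS : welch4 (d^n) * (Scard d n : ℚ) ≤ 48 * (d:ℚ)^w := by
    have h1 := welch_le hd2 n
    have h2 := Scard_le3 hd (by omega : 1 ≤ n)
    have h3 : welch4 (d^n) * (Scard d n : ℚ)
        ≤ (24/(d:ℚ)^(4*n)) * (2*(d:ℚ)^(n + ∑ j ∈ Finset.Icc 1 n, j)) := by
      apply mul_le_mul h1 h2 hS0.le
      positivity
    have e : (24/(d:ℚ)^(4*n)) * (2*(d:ℚ)^(n + ∑ j ∈ Finset.Icc 1 n, j))
        = 48 * (d:ℚ)^(((n + ∑ j ∈ Finset.Icc 1 n, j : ℕ):ℤ) - ((4*n:ℕ):ℤ)) := by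
      rw [zpow_sub₀ hne, zpow_natCast, zpow_natCast]
      ring
    have e2 : ((n + ∑ j ∈ Finset.Icc 1 n, j : ℕ):ℤ) - ((4*n:ℕ):ℤ) = w := by
      rw [hexp]
      push_cast
      ring
    rw [e, e2] at h3
    exact h3
  -- lower bound for the sum
  have hterm : ∀ k : ℕ, k ≤ n →
      (d:ℚ)^(w + ((k:ℤ)*(5-(k:ℤ)))/2)
        ≤ gbinom d n k * (d:ℚ)^((((n:ℤ) - (k:ℤ)) * ((n:ℤ) - (k:ℤ) + 3 - 2*4)) / 2) := by
    intro k hk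
    have := term_ge_c hd2 hk 1 (by rw [one_mul]; exact gbinom_ge hd2 hk)
    rwa [one_mul] at this
  have ht2 := hterm 2 (by omega)
  have ht3 := hterm 3 (by omega)
  norm_num at ht2 ht3
  have hsub : ({2,3} : Finset ℕ) ⊆ Finset.range (n+1) := by
    intro x hx
    fin_cases hx <;> (rw [Finset.mem_range]; omega)
  have hsum := Finset.sum_le_sum_of_subset_of_nonneg (f := fun k =>
      gbinom d n k * (d:ℚ) ^ ((((n : ℤ) - k) * ((n : ℤ) - k + 3 - 2 * ((4:ℕ):ℤ))) / 2)) hsub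
    (fun i _ _ => mul_nonneg (gbinom_nonneg hd2 n i) (zpow_pos hd0 _).le)
  rw [Finset.sum_pair (by norm_num : (2:ℕ) ≠ 3)] at hsum
  norm_num at hsum ⊢
  -- numeric finish
  have hzw : (0:ℚ) < (d:ℚ)^w := zpow_pos hd0 _
  have hd3 : (27:ℚ) ≤ (d:ℚ)^(3:ℤ) := by
    rw [show (3:ℤ) = ((3:ℕ):ℤ) from rfl, zpow_natCast]
    calc (27:ℚ) = 3^3 := by norm_num
      _ ≤ (d:ℚ)^3 := pow_le_pow_left₀ (by norm_num) hdQ 3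
  have hw3 : (d:ℚ)^(w+3) = (d:ℚ)^w * (d:ℚ)^(3:ℤ) := zpow_add₀ hne w 3
  calc welch4 (d^n) * (Scard d n : ℚ) ≤ 48 * (d:ℚ)^w := hWS
    _ < (d:ℚ)^(w+3) + (d:ℚ)^(w+3) := by rw [hw3]; nlinarith [hzw, hd3]
    _ ≤ _ := le_trans (add_le_add ht2 ht3) hsum

lemma gb1 (m : ℕ) : (19/10) * (2:ℚ)^(1*(m+10-1)) ≤ gbinom 2 (m+10) 1 := by
  unfold gbinom
  rw [if_pos (by omega), Finset.prod_range_one]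
  simp only [Nat.cast_ofNat]
  have p : ∀ a:ℕ, (2:ℚ)^(m+a) = 2^m * 2^a := fun a => pow_add 2 m a
  have hy1 : (1:ℚ) ≤ (2:ℚ)^m := one_le_pow₀ one_le_two
  rw [show m+10-0 = m+10 from rfl, show 1*(m+10-1) = m+9 from by omega, p 10, p 9]
  set y := (2:ℚ)^m with hy
  rw [le_div_iff₀ (by norm_num)]
  norm_num
  linarith

lemma gb2' (m : ℕ) : (5/2) * (2:ℚ)^(2*(m+10-2)) ≤ gbinom 2 (m+10) 2 := by
  unfold gbinom
  rw [if_pos (by omega), Finset.prod_range_succ, Finset.prod_range_one]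
  simp only [Nat.cast_ofNat]
  have p : ∀ a:ℕ, (2:ℚ)^(m+a) = 2^m * 2^a := fun a => pow_add 2 m a
  have hy1 : (1:ℚ) ≤ (2:ℚ)^m := one_le_pow₀ one_le_two
  rw [show m+10-0 = m+10 from rfl, show m+10-1 = m+9 from by omega,
      show 2*(m+10-2) = (m+8)*2 from by omega, pow_mul, p 10, p 9, p 8]
  set y := (2:ℚ)^m with hy
  rw [div_mul_div_comm, le_div_iff₀ (by norm_num)]
  norm_num
  nlinarith [hy1, mul_nonneg (by linarith : (0:ℚ) ≤ y) (by linarith : (0:ℚ) ≤ y - 1)]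

lemma gb3' (m : ℕ) : (29/10) * (2:ℚ)^(3*(m+10-3)) ≤ gbinom 2 (m+10) 3 := by
  unfold gbinom
  rw [if_pos (by omega), Finset.prod_range_succ, Finset.prod_range_succ, Finset.prod_range_one]
  simp only [Nat.cast_ofNat]
  have p : ∀ a:ℕ, (2:ℚ)^(m+a) = 2^m * 2^a := fun a => pow_add 2 m a
  have hy1 : (1:ℚ) ≤ (2:ℚ)^m := one_le_pow₀ one_le_two
  rw [show m+10-0 = m+10 from rfl, show m+10-1 = m+9 from by omega,
      show m+10-2 = m+8 from by omega,
      show 3*(m+10-3) = (m+7)*3 from by omega, pow_mul, p 10, p 9, p 8, p 7]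
  set y := (2:ℚ)^m with hy
  rw [div_mul_div_comm, div_mul_div_comm, le_div_iff₀ (by norm_num)]
  norm_num
  nlinarith [hy1, mul_nonneg (by linarith : (0:ℚ) ≤ y) (by linarith : (0:ℚ) ≤ y - 1),
    mul_nonneg (mul_nonneg (by linarith : (0:ℚ) ≤ y) (by linarith : (0:ℚ) ≤ y)) (by linarith : (0:ℚ) ≤ y - 1)]

lemma gb4' (m : ℕ) : 3 * (2:ℚ)^(4*(m+10-4)) ≤ gbinom 2 (m+10) 4 := by
  unfold gbinom
  rw [if_pos (by omega), Finset.prod_range_succ, Finset.prod_range_succ,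
      Finset.prod_range_succ, Finset.prod_range_one]
  simp only [Nat.cast_ofNat]
  have p : ∀ a:ℕ, (2:ℚ)^(m+a) = 2^m * 2^a := fun a => pow_add 2 m a
  have hy1 : (1:ℚ) ≤ (2:ℚ)^m := one_le_pow₀ one_le_two
  rw [show m+10-0 = m+10 from rfl, show m+10-1 = m+9 from by omega,
      show m+10-2 = m+8 from by omega, show m+10-3 = m+7 from by omega,
      show 4*(m+10-4) = (m+6)*4 from by omega, pow_mul, p 10, p 9, p 8, p 7, p 6]
  set y := (2:ℚ)^m with hy
  rw [div_mul_div_comm, div_mul_div_comm, div_mul_div_comm, le_div_iff₀ (by norm_num)]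
  norm_num
  nlinarith [hy1, mul_nonneg (by linarith : (0:ℚ) ≤ y) (by linarith : (0:ℚ) ≤ y - 1),
    mul_nonneg (mul_nonneg (by linarith : (0:ℚ) ≤ y) (by linarith : (0:ℚ) ≤ y)) (by linarith : (0:ℚ) ≤ y - 1),
    mul_nonneg (mul_nonneg (mul_nonneg (by linarith : (0:ℚ) ≤ y) (by linarith : (0:ℚ) ≤ y)) (by linarith : (0:ℚ) ≤ y)) (by linarith : (0:ℚ) ≤ y - 1)]

set_option maxHeartbeats 2000000 in
lemma main2 {n : ℕ} (hn : 10 ≤ n) : welch4 (2^n) < framePot 2 4 n := by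
  obtain ⟨m, rfl⟩ : ∃ m, n = m + 10 := ⟨n - 10, by omega⟩
  have hd2 : 2 ≤ 2 := le_refl 2
  have hd0 : (0:ℚ) < ((2:ℕ):ℚ) := by norm_num
  have hne : ((2:ℕ):ℚ) ≠ 0 := ne_of_gt hd0
  have hS0 := Scard_pos hd2 (m+10)
  rw [framePot, inv_mul_eq_div, lt_div_iff₀ hS0]
  have hw2 : 2 * ((((m+10:ℕ):ℤ)*(((m+10:ℕ):ℤ)-5))/2) = ((m+10:ℕ):ℤ)*(((m+10:ℕ):ℤ)-5) := by
    obtain ⟨y, hy⟩ := even_aux ((m+10:ℕ):ℤ)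
    rw [hy, Int.mul_ediv_cancel_left _ two_ne_zero]
  set w : ℤ := (((m+10:ℕ):ℤ)*(((m+10:ℕ):ℤ)-5))/2 with hwdef
  have hG : ((∑ j ∈ Finset.Icc 1 (m+10), j : ℕ) : ℤ) * 2 = ((m+10:ℕ):ℤ)*(((m+10:ℕ):ℤ)+1) := by
    exact_mod_cast gauss_sum (m+10)
  have hexp : (((m+10) + ∑ j ∈ Finset.Icc 1 (m+10), j : ℕ) : ℤ) = w + 4*((m+10:ℕ):ℤ) := by
    rw [Nat.cast_add]
    have h2 : 2*(((m+10:ℕ):ℤ) + ((∑ j ∈ Finset.Icc 1 (m+10), j : ℕ):ℤ))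
        = 2*(w + 4*((m+10:ℕ):ℤ)) := by
      linear_combination hG - hw2
    linarith
  have hWS : welch4 (2^(m+10)) * (Scard 2 (m+10) : ℚ) ≤ 60 * ((2:ℕ):ℚ)^w := by
    have h1 := welch_le hd2 (m+10)
    have h2 := Scard_le2 (by omega : 2 ≤ m+10)
    have h3 : welch4 (2^(m+10)) * (Scard 2 (m+10) : ℚ)
        ≤ (24/((2:ℕ):ℚ)^(4*(m+10))) * (5/2*((2:ℕ):ℚ)^((m+10) + ∑ j ∈ Finset.Icc 1 (m+10), j)) := by
      apply mul_le_mul h1 _ hS0.le (by positivity)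
      · exact_mod_cast h2
    have e : (24/((2:ℕ):ℚ)^(4*(m+10))) * (5/2*((2:ℕ):ℚ)^((m+10) + ∑ j ∈ Finset.Icc 1 (m+10), j))
        = 60 * ((2:ℕ):ℚ)^((((m+10) + ∑ j ∈ Finset.Icc 1 (m+10), j : ℕ):ℤ) - ((4*(m+10):ℕ):ℤ)) := by
      rw [zpow_sub₀ hne, zpow_natCast, zpow_natCast]
      ring
    have e2 : (((m+10) + ∑ j ∈ Finset.Icc 1 (m+10), j : ℕ):ℤ) - ((4*(m+10):ℕ):ℤ) = w := by
      rw [hexp]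
      push_cast
      ring
    rw [e, e2] at h3
    exact h3
  have ht1 := term_ge_c (d:=2) (n:=m+10) (k:=1) hd2 (by omega) (19/10) (by
    have := gb1 m; push_cast; simpa using this)
  have ht2 := term_ge_c (d:=2) (n:=m+10) (k:=2) hd2 (by omega) (5/2) (by
    have := gb2' m; push_cast; simpa using this)
  have ht3 := term_ge_c (d:=2) (n:=m+10) (k:=3) hd2 (by omega) (29/10) (by
    have := gb3' m; push_cast; simpa using this)
  have ht4 := term_ge_c (d:=2) (n:=m+10) (k:=4) hd2 (by omega) 3 (by
    have := gb4' m; push_cast; simpa using this)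
  rw [← hwdef] at ht1 ht2 ht3 ht4
  norm_num at ht1 ht2 ht3 ht4
  have hsub : ({1,2,3,4} : Finset ℕ) ⊆ Finset.range (m+10+1) := by
    intro x hx
    fin_cases hx <;> (rw [Finset.mem_range]; omega)
  have hsum := Finset.sum_le_sum_of_subset_of_nonneg (f := fun k =>
      gbinom 2 (m+10) k * ((2:ℕ):ℚ) ^ (((((m+10:ℕ)) : ℤ) - k) * ((((m+10:ℕ)):ℤ) - k + 3 - 2 * ((4:ℕ):ℤ)) / 2)) hsub
    (fun i _ _ => mul_nonneg (gbinom_nonneg hd2 (m+10) i) (zpow_pos hd0 _).le)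
  rw [show ({1,2,3,4} : Finset ℕ) = insert 1 (insert 2 {3,4}) from rfl,
      Finset.sum_insert (by norm_num), Finset.sum_insert (by norm_num),
      Finset.sum_pair (by norm_num : (3:ℕ) ≠ 4)] at hsum
  norm_num at hsum ⊢
  have hzw : (0:ℚ) < (2:ℚ)^w := zpow_pos (by norm_num) _
  have hz2 : (2:ℚ)^(w+2) = (2:ℚ)^w * 4 := by
    rw [zpow_add₀ (by norm_num : (2:ℚ) ≠ 0)]; norm_num
  have hz3 : (2:ℚ)^(w+3) = (2:ℚ)^w * 8 := by
    rw [zpow_add₀ (by norm_num : (2:ℚ) ≠ 0)]; norm_num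
  calc welch4 (2^(m+10)) * (Scard 2 (m+10) : ℚ) ≤ 60 * (2:ℚ)^w := by exact_mod_cast hWS
    _ < 19/10 * (2:ℚ)^(w+2) + (5/2 * (2:ℚ)^(w+3) + (29/10 * (2:ℚ)^(w+3) + 3 * (2:ℚ)^(w+2))) := by
        rw [hz2, hz3]; nlinarith [hzw]
    _ ≤ _ := le_trans (add_le_add ht1 (add_le_add ht2 (add_le_add ht3 ht4))) hsum

lemma case1 {d : ℕ} (hd : 2 ≤ d) : welch4 (d^1) < framePot d 4 1 := by
  have hq : (2:ℚ) ≤ (d:ℚ) := by exact_mod_cast hd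
  have hq0 : (0:ℚ) < (d:ℚ) := by linarith
  have hne1 : ((d:ℚ) - 1) ≠ 0 := sub_ne_zero.mpr (ne_of_gt (by linarith))
  have hg0 : gbinom d 1 0 = 1 := by unfold gbinom; simp
  have hg1 : gbinom d 1 1 = 1 := by
    unfold gbinom
    rw [if_pos le_rfl, Finset.prod_range_one]
    simp only [Nat.sub_zero, pow_one]
    exact div_self hne1
  have hsc : (Scard d 1 : ℚ) = (d:ℚ)*((d:ℚ)+1) := by
    unfold Scard
    norm_num
  rw [framePot, welch4, Finset.sum_range_succ, Finset.sum_range_succ, Finset.sum_range_zero,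
    hg0, hg1, hsc]
  norm_num
  have ez : ((d:ℚ)^(2:ℤ))⁻¹ = ((d:ℚ)^(2:ℕ))⁻¹ := by norm_cast
  have e : ((d:ℚ)+1)⁻¹ * ((d:ℚ))⁻¹ * (((d:ℚ)^(2:ℕ))⁻¹+1) = (1+(d:ℚ)^2)/((d:ℚ)^3*((d:ℚ)+1)) := by
    rw [eq_div_iff (by positivity)]
    field_simp
  rw [e, div_lt_div_iff₀ (by positivity) (by positivity)]
  have key : 24*(d:ℚ)^2 < (1+(d:ℚ)^2)*(((d:ℚ)+3)*((d:ℚ)+2)) := by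
    nlinarith [hq, mul_nonneg (sq_nonneg ((d:ℚ)-2)) (by positivity : (0:ℚ) ≤ (d:ℚ)^2+9*(d:ℚ)+15)]
  have key2 := mul_lt_mul_of_pos_right key (by positivity : (0:ℚ) < (d:ℚ)*((d:ℚ)+1))
  nlinarith [key2]

lemma case2 {d : ℕ} (hd : 2 ≤ d) : welch4 (d^2) < framePot d 4 2 := by
  have hq : (2:ℚ) ≤ (d:ℚ) := by exact_mod_cast hd
  have hq0 : (0:ℚ) < (d:ℚ) := by linarith
  have hne0 : (d:ℚ) ≠ 0 := ne_of_gt hq0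
  have hne1 : ((d:ℚ) - 1) ≠ 0 := sub_ne_zero.mpr (ne_of_gt (by linarith))
  have hne1' : ((d:ℚ)^2 - 1) ≠ 0 := by nlinarith
  have hg0 : gbinom d 2 0 = 1 := by unfold gbinom; simp
  have hg1 : gbinom d 2 1 = ((d:ℚ)^2-1)/((d:ℚ)-1) := by
    unfold gbinom
    rw [if_pos (by omega), Finset.prod_range_one]
    norm_num
  have hg2 : gbinom d 2 2 = 1 := by
    unfold gbinom
    rw [if_pos le_rfl, Finset.prod_range_succ, Finset.prod_range_one]
    norm_num
    rw [div_self hne1', div_self hne1, mul_one]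
  have hsc : (Scard d 2 : ℚ) = (d:ℚ)^2*(((d:ℚ)+1)*((d:ℚ)^2+1)) := by
    unfold Scard
    rw [show Finset.Icc 1 2 = {1,2} from by decide, Finset.prod_insert (by norm_num), Finset.prod_singleton]
    push_cast
    ring
  rw [framePot, welch4, Finset.sum_range_succ, Finset.sum_range_succ, Finset.sum_range_succ,
    Finset.sum_range_zero, hg0, hg1, hg2, hsc]
  norm_num
  have e3 : ((d:ℚ)^(3:ℤ)) = ((d:ℚ)^(3:ℕ)) := by norm_cast
  have e2 : ((d:ℚ)^(2:ℤ)) = ((d:ℚ)^(2:ℕ)) := by norm_cast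
  have hF : ((d:ℚ)^2+1)⁻¹ * ((d:ℚ)+1)⁻¹ * ((d:ℚ)^(2:ℕ))⁻¹ *
      (((d:ℚ)^(3:ℕ))⁻¹ + ((d:ℚ)^2-1)/((d:ℚ)-1) * ((d:ℚ)^(2:ℕ))⁻¹ + 1) = ((d:ℚ)^5)⁻¹ := by
    rw [inv_eq_one_div ((d:ℚ)^5), eq_div_iff (by positivity)]
    field_simp
    ring
  rw [hF, inv_eq_one_div, div_lt_div_iff₀ (by positivity) (by positivity)]
  have h4 : (4:ℚ) ≤ (d:ℚ)^2 := by nlinarith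
  have h16 : (16:ℚ) ≤ (d:ℚ)^4 := by nlinarith
  have key : 24*(d:ℚ)^3 < ((d:ℚ)^2+1)*(((d:ℚ)^2+2)*((d:ℚ)^2+3)) := by
    nlinarith [sq_nonneg ((d:ℚ)^3-12), h4, h16]
  have key2 := mul_lt_mul_of_pos_right key (by positivity : (0:ℚ) < (d:ℚ)^2)
  nlinarith [key2]

set_option maxHeartbeats 4000000 in
/-- **Stabilizer states never form 4-designs.** For every prime `d ≥ 2` and every
`n ≥ 1`, the frame potential strictly exceeds the order-4 Welch bound:
`F_4(d,n) > W_4(d^n)`. -/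
theorem stab_not_four_design (d n : ℕ) (hd : d.Prime) (hn : 1 ≤ n) :
    welch4 (d ^ n) < framePot d 4 n := by
  have hd2 : 2 ≤ d := hd.two_le
  by_cases hdd : d = 2
  · subst hdd
    rcases lt_or_ge n 10 with h | h
    · interval_cases n <;>
      · unfold welch4 framePot Scard gbinom
        simp [Finset.sum_range_succ, Finset.prod_range_succ, Finset.prod_Icc_succ_top]
        norm_num
    · exact main2 h
  · have hd3 : 3 ≤ d := by omega
    rcases lt_or_ge n 3 with h | h
    · interval_cases n
      · exact case1 hd2
      · exact case2 hd2
    · exact main3 hd3 h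
end
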